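/- In OptCS-MSel, the score-generating functional V defined by V^{(j)} = (V_{n₁+1}(k̂_j), …, V_n(k̂_j), V̂_{n+1}(k̂_j), …, V̂_{n+m}(k̂_j)) is, for every j in [m], monotone for the j-th null and permutation equivariant, and the auxiliary selection function R defined by R̂_j = |S_j(k̂_j)| is permutation invariant under the j-th null. Consequently, if for every j in [m] the vector (Z_1, …, Z_n, Z_{n+j}) is exchangeable conditional on {Ẑ_{n+ℓ}}_{ℓ≠j}, then the output of OptCS-MSel (under any of the three pruning options) satisfies FDR ≤ q. -/

import Mathlib

open MeasureTheory ProbabilityTheory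

/-- The pruning threshold `r*(λ) = max{r ∈ {0,…,m} : #{j : p_j ≤ q·R̂_j/m and λ_j·R̂_j ≤ r} ≥ r}`. -/
noncomputable def prunedThreshold (m : ℕ) (q : ℝ) (p R lam : Fin m → ℝ) : ℕ :=
  Nat.findGreatest
    (fun r => r ≤ Set.ncard {j : Fin m | p j ≤ q * R j / m ∧ lam j * R j ≤ (r : ℝ)}) m

/-- The pruned selection set `S(λ) = {j : p_j ≤ q·R̂_j/m and λ_j·R̂_j ≤ r*(λ)}`. -/
noncomputable def prunedSet (m : ℕ) (q : ℝ) (p R lam : Fin m → ℝ) : Set (Fin m) :=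
  {j : Fin m | p j ≤ q * R j / m ∧ lam j * R j ≤ (prunedThreshold m q p R lam : ℝ)}

/-- The BH index `r*_BH = max{r ∈ {0,…,m} : #{j : p_j ≤ q·r/m} ≥ r}`. -/
noncomputable def bhThreshold (m : ℕ) (q : ℝ) (p : Fin m → ℝ) : ℕ :=
  Nat.findGreatest (fun r => r ≤ Set.ncard {j : Fin m | p j ≤ q * (r : ℝ) / m}) m

/-- The BH selection set `S_BH = {j : p_j ≤ q·r*_BH/m}`. -/
noncomputable def bhSet (m : ℕ) (q : ℝ) (p : Fin m → ℝ) : Set (Fin m) :=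
  {j : Fin m | p j ≤ q * (bhThreshold m q p : ℝ) / m}

namespace OptCS

/-- A score-generating functional: maps preparatory, calibration, and test inputs to an
m × (n₂ + m) matrix of scores; `V prep cal test j` is the j-th row, giving scores for the n₂
calibration points (`Sum.inl`) and the m test points (`Sum.inr`). -/
abbrev SGF (𝓧 𝓨 : Type*) (n₁ n₂ m : ℕ) :=
  (Fin n₁ → 𝓧 × 𝓨) → (Fin n₂ → 𝓧 × 𝓨) → (Fin m → 𝓧 × 𝓨) → Fin m → Fin n₂ ⊕ Fin m → ℝ

/-- An auxiliary selection function, producing the m auxiliary selection sizes. -/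
abbrev ASF (𝓧 𝓨 : Type*) (n₁ n₂ m : ℕ) :=
  (Fin n₁ → 𝓧 × 𝓨) → (Fin n₂ → 𝓧 × 𝓨) → (Fin m → 𝓧 × 𝓨) → Fin m → ℝ

variable {𝓧 𝓨 : Type*}

/-- The combined vector of the n₂ calibration inputs together with a value `zj` in the j-th
test slot, indexed by `Option (Fin n₂)` (`none` is the j-th test slot). -/
def combine {n₂ : ℕ} (cal : Fin n₂ → 𝓧 × 𝓨) (zj : 𝓧 × 𝓨) : Option (Fin n₂) → 𝓧 × 𝓨 :=
  fun o => o.elim zj cal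

/-- The output coordinates corresponding to the index set {calibration points, j-th test point}. -/
def coordIdx {n₂ m : ℕ} (j : Fin m) : Option (Fin n₂) → Fin n₂ ⊕ Fin m :=
  fun o => o.elim (Sum.inr j) Sum.inl

/-- Monotonicity for the j-th null: with thresholds c = cfun x, whenever y ≤ cfun x, replacing
the j-th test input (x, cfun x) by (x, y) does not increase the (n₂+j)-th coordinate of the j-th
row; and for ℓ ≠ j, replacing the ℓ-th test input (x, cfun x) by (x, y) (with y ≤ cfun x) leaves
the ℓ-th test coordinate of the j-th row unchanged. -/
def MonotoneNull [Preorder 𝓨] {n₁ n₂ m : ℕ} (cfun : 𝓧 → 𝓨) (V : SGF 𝓧 𝓨 n₁ n₂ m)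
    (j : Fin m) : Prop :=
  (∀ (prep : Fin n₁ → 𝓧 × 𝓨) (cal : Fin n₂ → 𝓧 × 𝓨) (test : Fin m → 𝓧 × 𝓨) (x : 𝓧) (y : 𝓨),
      y ≤ cfun x →
      V prep cal (Function.update test j (x, y)) j (Sum.inr j)
        ≤ V prep cal (Function.update test j (x, cfun x)) j (Sum.inr j)) ∧
  (∀ (prep : Fin n₁ → 𝓧 × 𝓨) (cal : Fin n₂ → 𝓧 × 𝓨) (test : Fin m → 𝓧 × 𝓨) (l : Fin m),
      l ≠ j → ∀ (x : 𝓧) (y : 𝓨), y ≤ cfun x →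
      V prep cal (Function.update test l (x, y)) j (Sum.inr l)
        = V prep cal (Function.update test l (x, cfun x)) j (Sum.inr l))

/-- Permutation equivariance: for every j, jointly permuting the n₂ calibration inputs and the
j-th test input permutes the corresponding coordinates of the j-th row accordingly. -/
def PermEquivariant {n₁ n₂ m : ℕ} (V : SGF 𝓧 𝓨 n₁ n₂ m) : Prop :=
  ∀ (j : Fin m) (prep : Fin n₁ → 𝓧 × 𝓨) (cal : Fin n₂ → 𝓧 × 𝓨) (test : Fin m → 𝓧 × 𝓨)
    (π : Equiv.Perm (Option (Fin n₂))) (i : Option (Fin n₂)),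
    V prep (fun i' => combine cal (test j) (π (some i')))
        (Function.update test j (combine cal (test j) (π none))) j (coordIdx j i)
      = V prep cal test j (coordIdx j (π i))

/-- Permutation invariance under the j-th null for an auxiliary selection function. -/
def PermInvariantNull [Preorder 𝓨] {n₁ n₂ m : ℕ} (cfun : 𝓧 → 𝓨) (R : ASF 𝓧 𝓨 n₁ n₂ m)
    (j : Fin m) : Prop :=
  ∃ R₀ : ASF 𝓧 𝓨 n₁ n₂ m,
    (∀ (prep : Fin n₁ → 𝓧 × 𝓨) (cal : Fin n₂ → 𝓧 × 𝓨) (test : Fin m → 𝓧 × 𝓨) (x : 𝓧) (y : 𝓨),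
        y ≤ cfun x →
        R₀ prep cal (Function.update test j (x, y)) j
          ≤ R prep cal (Function.update test j (x, cfun x)) j) ∧
    (∀ (prep : Fin n₁ → 𝓧 × 𝓨) (cal : Fin n₂ → 𝓧 × 𝓨) (test : Fin m → 𝓧 × 𝓨)
        (π : Equiv.Perm (Option (Fin n₂))),
        R₀ prep (fun i' => combine cal (test j) (π (some i')))
            (Function.update test j (combine cal (test j) (π none))) j
          = R₀ prep cal test j)

/-- The OptCS conformal p-values `p_j = (1 + #{i : V_i^{(j)} ≤ V̂_{n+j}^{(j)}})/(n₂+1)`. -/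
noncomputable def pvals {n₁ n₂ m : ℕ} (V : SGF 𝓧 𝓨 n₁ n₂ m)
    (prep : Fin n₁ → 𝓧 × 𝓨) (cal : Fin n₂ → 𝓧 × 𝓨) (test : Fin m → 𝓧 × 𝓨) : Fin m → ℝ :=
  fun j =>
    (1 + (Set.ncard {i : Fin n₂ |
        V prep cal test j (Sum.inl i) ≤ V prep cal test j (Sum.inr j)} : ℝ)) / (n₂ + 1)

/-- A deterministic argmax over `Fin K`. -/
noncomputable def argmaxFin {K : ℕ} (hK : 0 < K) (f : Fin K → ℕ) : Fin K :=
  (Finset.exists_max_image Finset.univ f ⟨⟨0, hK⟩, Finset.mem_univ _⟩).choose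

variable {𝓧 : Type*}

/-- OptCS-MSel modified p-values `p̃_ℓ^{(j)}(k)` (the j-th entry is set to 0, encoding the
extra zero p-value). -/
noncomputable def mselPtilde (n₂ m K : ℕ) (Vsc : Fin K → 𝓧 × ℝ → ℝ)
    (cal : Fin n₂ → 𝓧 × ℝ) (test : Fin m → 𝓧 × ℝ) (j : Fin m) (k : Fin K) : Fin m → ℝ :=
  fun l => if l = j then 0 else
    ((Set.ncard {i : Fin n₂ | Vsc k (cal i) ≤ Vsc k (test l)} : ℝ) +
        (if Vsc k (test j) ≤ Vsc k (test l) then (1 : ℝ) else 0)) / (n₂ + 1)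

/-- The permutation-invariant estimate `S_j(k)`: BH at level q applied to
`{p̃_ℓ^{(j)}(k)}_{ℓ≠j} ∪ {0}`. -/
noncomputable def mselSel (n₂ m K : ℕ) (q : ℝ) (Vsc : Fin K → 𝓧 × ℝ → ℝ)
    (cal : Fin n₂ → 𝓧 × ℝ) (test : Fin m → 𝓧 × ℝ) (j : Fin m) (k : Fin K) : Set (Fin m) :=
  bhSet m q (mselPtilde n₂ m K Vsc cal test j k)

/-- The selected model index `k̂_j = argmax_k |S_j(k)|`. -/
noncomputable def mselKhat (n₂ m K : ℕ) (hK : 0 < K) (q : ℝ) (Vsc : Fin K → 𝓧 × ℝ → ℝ)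
    (cal : Fin n₂ → 𝓧 × ℝ) (test : Fin m → 𝓧 × ℝ) (j : Fin m) : Fin K :=
  argmaxFin hK (fun k => Set.ncard (mselSel n₂ m K q Vsc cal test j k))

/-- The OptCS-MSel score-generating functional: row j uses the scores of the selected
model k̂_j. -/
noncomputable def mselV (n₁ n₂ m K : ℕ) (hK : 0 < K) (q : ℝ) (Vsc : Fin K → 𝓧 × ℝ → ℝ) :
    SGF 𝓧 ℝ n₁ n₂ m :=
  fun _prep cal test j =>
    Sum.elim (fun i => Vsc (mselKhat n₂ m K hK q Vsc cal test j) (cal i))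
      (fun l => Vsc (mselKhat n₂ m K hK q Vsc cal test j) (test l))

/-- The OptCS-MSel auxiliary selection function `R̂_j = |S_j(k̂_j)|`. -/
noncomputable def mselR (n₁ n₂ m K : ℕ) (hK : 0 < K) (q : ℝ) (Vsc : Fin K → 𝓧 × ℝ → ℝ) :
    ASF 𝓧 ℝ n₁ n₂ m :=
  fun _prep cal test j =>
    (Set.ncard (mselSel n₂ m K q Vsc cal test j
        (mselKhat n₂ m K hK q Vsc cal test j)) : ℝ)


/-! ### Auxiliary counting lemmas -/

section Counting

lemma ncard_setOf_eq_sum {ι : Type*} [Fintype ι] (p : ι → Prop) [DecidablePred p] :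
    Set.ncard {i | p i} = ∑ i : ι, if p i then 1 else 0 := by
  rw [← Finset.card_filter, Set.ncard_eq_toFinset_card']
  congr 1
  ext i
  simp

lemma ncard_option {ι : Type*} [Fintype ι] (p : Option ι → Prop) [DecidablePred p] :
    Set.ncard {o : Option ι | p o}
      = Set.ncard {i : ι | p (some i)} + (if p none then 1 else 0) := by
  rw [ncard_setOf_eq_sum, ncard_setOf_eq_sum, Fintype.sum_option]
  omega

lemma ncard_comp_equiv {α β : Type*} (e : α ≃ β) (p : β → Prop) :
    Set.ncard {a | p (e a)} = Set.ncard {b | p b} := by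
  have h : {a | p (e a)} = e.symm '' {b | p b} := by
    ext a
    constructor
    · exact fun h => ⟨e a, h, e.symm_apply_apply a⟩
    · rintro ⟨b, hb, rfl⟩; simpa using hb
  rw [h, Set.ncard_image_of_injective _ e.symm.injective]

lemma ncard_rank_le {ι : Type*} [Fintype ι] (s : ι → ℝ) (T : ℝ) (hT : 0 ≤ T) :
    (Set.ncard {a : ι | (Set.ncard {b : ι | s b ≤ s a} : ℝ) ≤ T} : ℝ) ≤ T := by
  classical
  set A := {a : ι | (Set.ncard {b : ι | s b ≤ s a} : ℝ) ≤ T} with hA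
  rcases A.eq_empty_or_nonempty with h | h
  · rw [h]; simpa using hT
  · obtain ⟨a, ha, hmax⟩ := Set.exists_max_image A s (Set.toFinite A) h
    have hsub : A ⊆ {b | s b ≤ s a} := fun b hb => hmax b hb
    have h1 : (Set.ncard A : ℝ) ≤ (Set.ncard {b | s b ≤ s a} : ℝ) := by
      exact_mod_cast Set.ncard_le_ncard hsub (Set.toFinite _)
    exact h1.trans ha

end Counting

/-! ### Pruned-set basic properties -/

section Pruned

lemma prunedThreshold_le_ncard (m : ℕ) (q : ℝ) (p R lam : Fin m → ℝ) :
    prunedThreshold m q p R lam ≤ Set.ncard (prunedSet m q p R lam) := by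
  classical
  have h0 : (fun r : ℕ => r ≤ Set.ncard
      {j : Fin m | p j ≤ q * R j / m ∧ lam j * R j ≤ (r : ℝ)}) 0 := by
    exact Nat.zero_le _
  unfold prunedSet prunedThreshold
  exact Nat.findGreatest_spec (P := fun r : ℕ => r ≤ Set.ncard
    {j : Fin m | p j ≤ q * R j / m ∧ lam j * R j ≤ (r : ℝ)}) (Nat.zero_le m) h0

lemma prunedThreshold_anti (m : ℕ) (q : ℝ) (p R : Fin m → ℝ) {lam lam' : Fin m → ℝ}
    (hR : ∀ j, 0 ≤ R j) (h : ∀ j, lam j ≤ lam' j) :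
    prunedThreshold m q p R lam' ≤ prunedThreshold m q p R lam := by
  classical
  refine Nat.findGreatest_mono (fun r hr => le_trans hr ?_) le_rfl
  refine Set.ncard_le_ncard (fun j hj => ⟨hj.1, ?_⟩) (Set.toFinite _)
  exact le_trans (mul_le_mul_of_nonneg_right (h j) (hR j)) hj.2

lemma prunedSet_anti (m : ℕ) (q : ℝ) (p R : Fin m → ℝ) {lam lam' : Fin m → ℝ}
    (hR : ∀ j, 0 ≤ R j) (h : ∀ j, lam j ≤ lam' j) :
    prunedSet m q p R lam' ⊆ prunedSet m q p R lam := by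
  intro j hj
  refine ⟨hj.1, le_trans (mul_le_mul_of_nonneg_right (h j) (hR j)) (le_trans hj.2 ?_)⟩
  exact_mod_cast prunedThreshold_anti m q p R hR h

lemma mem_prunedSet_imp {m : ℕ} {q : ℝ} {p R lam : Fin m → ℝ} {j : Fin m}
    (hj : j ∈ prunedSet m q p R lam) :
    p j ≤ q * R j / m ∧ lam j * R j ≤ (Set.ncard (prunedSet m q p R lam) : ℝ) :=
  ⟨hj.1, le_trans hj.2 (by exact_mod_cast prunedThreshold_le_ncard m q p R lam)⟩

end Pruned

/-! ### Invariance of the OptCS-MSel quantities -/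

section Config

variable {𝓧' : Type*} {n₂ m K : ℕ} (Vsc : Fin K → 𝓧' × ℝ → ℝ)

lemma combinedCount (cal : Fin n₂ → 𝓧' × ℝ) (t : 𝓧' × ℝ) (f : 𝓧' × ℝ → ℝ) (T : ℝ) :
    Set.ncard {o : Option (Fin n₂) | f (combine cal t o) ≤ T}
      = Set.ncard {i : Fin n₂ | f (cal i) ≤ T} + (if f t ≤ T then 1 else 0) := by
  classical
  rw [ncard_setOf_eq_sum, ncard_setOf_eq_sum,
    Fintype.sum_option (f := fun o => if f (combine cal t o) ≤ T then 1 else 0)]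
  have h1 : (if f (combine cal t none) ≤ T then 1 else 0)
      = (if f t ≤ T then 1 else 0) := by
    by_cases h : f t ≤ T <;> simp [combine, h]
  have h2 : (∑ i : Fin n₂, if f (combine cal t (some i)) ≤ T then 1 else 0)
      = ∑ i : Fin n₂, if f (cal i) ≤ T then 1 else 0 := by
    refine Finset.sum_congr rfl fun i _ => ?_
    by_cases h : f (cal i) ≤ T <;> simp [combine, h]
  rw [h1, h2]
  omega

lemma mselPtilde_eq_combined (cal : Fin n₂ → 𝓧' × ℝ) (test : Fin m → 𝓧' × ℝ)
    (j : Fin m) (k : Fin K) (l : Fin m) (hl : l ≠ j) :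
    mselPtilde n₂ m K Vsc cal test j k l
      = (Set.ncard {o : Option (Fin n₂) |
          Vsc k (combine cal (test j) o) ≤ Vsc k (test l)} : ℝ) / (n₂ + 1) := by
  classical
  unfold mselPtilde
  rw [if_neg hl, combinedCount cal (test j) (Vsc k) (Vsc k (test l))]
  by_cases h : Vsc k (test j) ≤ Vsc k (test l) <;> simp [h] <;> push_cast <;> ring

lemma mselPtilde_congr {cal1 cal2 : Fin n₂ → 𝓧' × ℝ} {test1 test2 : Fin m → 𝓧' × ℝ}
    {j : Fin m} (e : Option (Fin n₂) ≃ Option (Fin n₂))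
    (h1 : ∀ k o, Vsc k (combine cal1 (test1 j) o) = Vsc k (combine cal2 (test2 j) (e o)))
    (h2 : ∀ k (l : Fin m), l ≠ j → Vsc k (test1 l) = Vsc k (test2 l)) :
    mselPtilde n₂ m K Vsc cal1 test1 j = mselPtilde n₂ m K Vsc cal2 test2 j := by
  funext k l
  by_cases hl : l = j
  · simp [mselPtilde, hl]
  · rw [mselPtilde_eq_combined _ _ _ _ _ _ hl, mselPtilde_eq_combined _ _ _ _ _ _ hl,
      h2 k l hl]
    have hset : {o : Option (Fin n₂) | Vsc k (combine cal1 (test1 j) o) ≤ Vsc k (test2 l)}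
        = {o | Vsc k (combine cal2 (test2 j) (e o)) ≤ Vsc k (test2 l)} := by
      ext o; rw [Set.mem_setOf_eq, Set.mem_setOf_eq, h1]
    rw [hset, ncard_comp_equiv e (fun o => Vsc k (combine cal2 (test2 j) o) ≤ Vsc k (test2 l))]

lemma mselKhat_congr (hK : 0 < K) (q : ℝ) {cal1 cal2 : Fin n₂ → 𝓧' × ℝ}
    {test1 test2 : Fin m → 𝓧' × ℝ} {j : Fin m} (e : Option (Fin n₂) ≃ Option (Fin n₂))
    (h1 : ∀ k o, Vsc k (combine cal1 (test1 j) o) = Vsc k (combine cal2 (test2 j) (e o)))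
    (h2 : ∀ k (l : Fin m), l ≠ j → Vsc k (test1 l) = Vsc k (test2 l)) :
    mselKhat n₂ m K hK q Vsc cal1 test1 j = mselKhat n₂ m K hK q Vsc cal2 test2 j := by
  unfold mselKhat mselSel
  rw [mselPtilde_congr Vsc e h1 h2]

lemma mselR_congr (n₁ : ℕ) (hK : 0 < K) (q : ℝ) {cal1 cal2 : Fin n₂ → 𝓧' × ℝ}
    {test1 test2 : Fin m → 𝓧' × ℝ} {j : Fin m}
    (prep1 prep2 : Fin n₁ → 𝓧' × ℝ) (e : Option (Fin n₂) ≃ Option (Fin n₂))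
    (h1 : ∀ k o, Vsc k (combine cal1 (test1 j) o) = Vsc k (combine cal2 (test2 j) (e o)))
    (h2 : ∀ k (l : Fin m), l ≠ j → Vsc k (test1 l) = Vsc k (test2 l)) :
    mselR n₁ n₂ m K hK q Vsc prep1 cal1 test1 j
      = mselR n₁ n₂ m K hK q Vsc prep2 cal2 test2 j := by
  unfold mselR mselSel
  rw [mselPtilde_congr Vsc e h1 h2, mselKhat_congr Vsc hK q e h1 h2]

lemma pvals_mselV_eq (n₁ : ℕ) (hK : 0 < K) (q : ℝ) (prep : Fin n₁ → 𝓧' × ℝ)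
    (cal : Fin n₂ → 𝓧' × ℝ) (test : Fin m → 𝓧' × ℝ) (j : Fin m) :
    pvals (mselV n₁ n₂ m K hK q Vsc) prep cal test j
      = (Set.ncard {o : Option (Fin n₂) |
          Vsc (mselKhat n₂ m K hK q Vsc cal test j) (combine cal (test j) o)
            ≤ Vsc (mselKhat n₂ m K hK q Vsc cal test j) (test j)} : ℝ) / (n₂ + 1) := by
  classical
  unfold pvals mselV
  simp only [Sum.elim_inl, Sum.elim_inr]
  rw [combinedCount, if_pos le_rfl]
  push_cast
  ring

end Config

/-! ### The three structural properties of OptCS-MSel -/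

section Props

variable {n₁ n₂ m K : ℕ} (hK : 0 < K) (q : ℝ) {𝓧' : Type*} (Vsc : Fin K → 𝓧' × ℝ → ℝ)
  (cfun : 𝓧' → ℝ)

lemma combine_perm (cal : Fin n₂ → 𝓧' × ℝ) (z : 𝓧' × ℝ)
    (π : Equiv.Perm (Option (Fin n₂))) (o : Option (Fin n₂)) :
    combine (fun i' => combine cal z (π (some i'))) (combine cal z (π none)) o
      = combine cal z (π o) := by
  cases o <;> rfl

lemma msel_monotoneNull (hVscClip : ∀ (k : Fin K) (x : 𝓧') (y : ℝ),
      y ≤ cfun x → Vsc k (x, y) = Vsc k (x, cfun x)) (j : Fin m) :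
    MonotoneNull cfun (mselV n₁ n₂ m K hK q Vsc) j := by
  constructor
  · intro prep cal test x y hy
    have hkh : mselKhat n₂ m K hK q Vsc cal (Function.update test j (x, y)) j
        = mselKhat n₂ m K hK q Vsc cal (Function.update test j (x, cfun x)) j := by
      refine mselKhat_congr Vsc hK q (Equiv.refl _) (fun k o => ?_) (fun k l hl => ?_)
      · cases o with
        | none => simp [combine, hVscClip k x y hy]
        | some i => rfl
      · simp [Function.update_of_ne hl]
    unfold mselV
    simp only [Sum.elim_inr, Function.update_self]
    rw [hkh, hVscClip _ x y hy]
  · intro prep cal test l hl x y hy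
    have hkh : mselKhat n₂ m K hK q Vsc cal (Function.update test l (x, y)) j
        = mselKhat n₂ m K hK q Vsc cal (Function.update test l (x, cfun x)) j := by
      refine mselKhat_congr Vsc hK q (Equiv.refl _) (fun k o => ?_) (fun k l' hl' => ?_)
      · cases o with
        | none => simp [combine, Function.update_of_ne (Ne.symm hl)]
        | some i => rfl
      · by_cases h : l' = l
        · subst h; simp only [Function.update_self]; exact hVscClip k x y hy
        · simp [Function.update_of_ne h]
    unfold mselV
    simp only [Sum.elim_inr, Function.update_self]
    rw [hkh, hVscClip _ x y hy]

lemma msel_permEquivariant : PermEquivariant (mselV n₁ n₂ m K hK q Vsc) := by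
  intro j prep cal test π i
  have hcomb : ∀ o : Option (Fin n₂),
      combine (fun i' => combine cal (test j) (π (some i')))
        (Function.update test j (combine cal (test j) (π none)) j) o
      = combine cal (test j) (π o) := by
    intro o
    rw [Function.update_self]
    exact combine_perm cal (test j) π o
  have hkh : mselKhat n₂ m K hK q Vsc (fun i' => combine cal (test j) (π (some i')))
      (Function.update test j (combine cal (test j) (π none))) j
      = mselKhat n₂ m K hK q Vsc cal test j := by
    refine mselKhat_congr Vsc hK q π (fun k o => ?_)
      (fun k l hl => by simp [Function.update_of_ne hl])
    rw [hcomb o]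
  have hval : ∀ (o : Option (Fin n₂)),
      mselV n₁ n₂ m K hK q Vsc prep cal test j (coordIdx j o)
        = Vsc (mselKhat n₂ m K hK q Vsc cal test j) (combine cal (test j) o) := by
    intro o; cases o <;> rfl
  have hval' : ∀ (o : Option (Fin n₂)),
      mselV n₁ n₂ m K hK q Vsc prep (fun i' => combine cal (test j) (π (some i')))
        (Function.update test j (combine cal (test j) (π none))) j (coordIdx j o)
        = Vsc (mselKhat n₂ m K hK q Vsc (fun i' => combine cal (test j) (π (some i')))
            (Function.update test j (combine cal (test j) (π none))) j)
            (combine (fun i' => combine cal (test j) (π (some i')))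
              (Function.update test j (combine cal (test j) (π none)) j) o) := by
    intro o; cases o <;> rfl
  rw [hval' i, hval (π i), hcomb i, hkh]

lemma msel_permInvariantNull (hVscClip : ∀ (k : Fin K) (x : 𝓧') (y : ℝ),
      y ≤ cfun x → Vsc k (x, y) = Vsc k (x, cfun x)) (j : Fin m) :
    PermInvariantNull cfun (mselR n₁ n₂ m K hK q Vsc) j := by
  refine ⟨mselR n₁ n₂ m K hK q Vsc, fun prep cal test x y hy => ?_,
    fun prep cal test π => ?_⟩
  · refine le_of_eq (mselR_congr Vsc n₁ hK q prep prep (Equiv.refl _) (fun k o => ?_)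
      (fun k l hl => by simp [Function.update_of_ne hl]))
    cases o with
    | none => simp [combine, hVscClip k x y hy]
    | some i => rfl
  · refine mselR_congr Vsc n₁ hK q prep prep π (fun k o => ?_)
      (fun k l hl => by simp [Function.update_of_ne hl])
    rw [Function.update_self, combine_perm cal (test j) π o]

end Props

/-! ### The core deterministic (pointwise) bound -/

section Core

variable {𝓧' : Type*}

/-- The test configuration used by `Phi`: slot `j` carries the clipped point `(z₁, c(z₁))`,
the other slots the (already clipped) points `t`. -/
noncomputable def testOf (cfun : 𝓧' → ℝ) {m : ℕ} (j : Fin m) (z : 𝓧' × ℝ)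
    (t : {l : Fin m // l ≠ j} → 𝓧' × ℝ) : Fin m → 𝓧' × ℝ :=
  fun l => if h : l = j then (z.1, cfun z.1) else t ⟨l, h⟩

@[simp] lemma testOf_same (cfun : 𝓧' → ℝ) {m : ℕ} (j : Fin m) (z : 𝓧' × ℝ)
    (t : {l : Fin m // l ≠ j} → 𝓧' × ℝ) : testOf cfun j z t j = (z.1, cfun z.1) :=
  dif_pos rfl

lemma testOf_ne (cfun : 𝓧' → ℝ) {m : ℕ} {j l : Fin m} (hl : l ≠ j) (z : 𝓧' × ℝ)
    (t : {l : Fin m // l ≠ j} → 𝓧' × ℝ) : testOf cfun j z t l = t ⟨l, hl⟩ :=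
  dif_neg hl

open Classical in
/-- The per-test-point bounding functional `1{null} · 1{p_j ≤ q R_j / m} / max(1, R_j)`. -/
noncomputable def PhiAux (n₁ n₂ m K : ℕ) (hK : 0 < K) (q : ℝ) (Vsc : Fin K → 𝓧' × ℝ → ℝ)
    (cfun : 𝓧' → ℝ) (j : Fin m) (prep : Fin n₁ → 𝓧' × ℝ) (cal : Fin n₂ → 𝓧' × ℝ)
    (z : 𝓧' × ℝ) (t : {l : Fin m // l ≠ j} → 𝓧' × ℝ) : ℝ :=
  (if z.2 ≤ cfun z.1 then (1:ℝ) else 0) *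
    ((if pvals (mselV n₁ n₂ m K hK q Vsc) prep cal (testOf cfun j z t) j
        ≤ q * mselR n₁ n₂ m K hK q Vsc prep cal (testOf cfun j z t) j / m
      then (1:ℝ) else 0) /
      max 1 (mselR n₁ n₂ m K hK q Vsc prep cal (testOf cfun j z t) j))

/-- The bounding functional as a function of the combined data vector. -/
noncomputable def Phi (n₁ n₂ m K : ℕ) (hK : 0 < K) (q : ℝ) (Vsc : Fin K → 𝓧' × ℝ → ℝ)
    (cfun : 𝓧' → ℝ) (j : Fin m) (v : ((Fin n₁ ⊕ Fin n₂) ⊕ Unit) → 𝓧' × ℝ)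
    (t : {l : Fin m // l ≠ j} → 𝓧' × ℝ) : ℝ :=
  PhiAux n₁ n₂ m K hK q Vsc cfun j (fun i => v (Sum.inl (Sum.inl i)))
    (fun i => v (Sum.inl (Sum.inr i))) (v (Sum.inr ())) t

/-- The swap permutations used in the leave-one-out argument. -/
def swapPerm (n₁ n₂ : ℕ) (o : Option (Fin n₂)) : Equiv.Perm ((Fin n₁ ⊕ Fin n₂) ⊕ Unit) :=
  o.elim (Equiv.refl _) (fun i => Equiv.swap (Sum.inr ()) (Sum.inl (Sum.inr i)))

lemma PhiAux_nonneg (n₁ n₂ m K : ℕ) (hK : 0 < K) (q : ℝ) (Vsc : Fin K → 𝓧' × ℝ → ℝ)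
    (cfun : 𝓧' → ℝ) (j : Fin m) (prep : Fin n₁ → 𝓧' × ℝ) (cal : Fin n₂ → 𝓧' × ℝ)
    (z : 𝓧' × ℝ) (t : {l : Fin m // l ≠ j} → 𝓧' × ℝ) :
    0 ≤ PhiAux n₁ n₂ m K hK q Vsc cfun j prep cal z t := by
  unfold PhiAux
  have h1 : (0:ℝ) < max 1 (mselR n₁ n₂ m K hK q Vsc prep cal (testOf cfun j z t) j) :=
    lt_of_lt_of_le one_pos (le_max_left _ _)
  positivity

lemma PhiAux_le_one (n₁ n₂ m K : ℕ) (hK : 0 < K) (q : ℝ) (Vsc : Fin K → 𝓧' × ℝ → ℝ)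
    (cfun : 𝓧' → ℝ) (j : Fin m) (prep : Fin n₁ → 𝓧' × ℝ) (cal : Fin n₂ → 𝓧' × ℝ)
    (z : 𝓧' × ℝ) (t : {l : Fin m // l ≠ j} → 𝓧' × ℝ) :
    PhiAux n₁ n₂ m K hK q Vsc cfun j prep cal z t ≤ 1 := by
  unfold PhiAux
  set R := mselR n₁ n₂ m K hK q Vsc prep cal (testOf cfun j z t) j
  have h1 : (0:ℝ) < max 1 R := lt_of_lt_of_le one_pos (le_max_left _ _)
  have h2 : (if pvals (mselV n₁ n₂ m K hK q Vsc) prep cal (testOf cfun j z t) j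
      ≤ q * R / m then (1:ℝ) else 0) ≤ 1 := by split <;> norm_num
  have h3 : (if z.2 ≤ cfun z.1 then (1:ℝ) else 0) ≤ 1 := by split <;> norm_num
  have h4 : (if z.2 ≤ cfun z.1 then (1:ℝ) else 0) ≥ 0 := by split <;> norm_num
  calc _ ≤ 1 * ((if pvals (mselV n₁ n₂ m K hK q Vsc) prep cal (testOf cfun j z t) j
        ≤ q * R / m then (1:ℝ) else 0) / max 1 R) := by
        refine mul_le_mul_of_nonneg_right h3 ?_
        positivity
    _ ≤ 1 := by
        rw [one_mul, div_le_one h1]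
        exact h2.trans (le_max_left _ _)

end Core

section CoreSum

variable {𝓧' : Type*}

lemma core_sum (n₁ n₂ m K : ℕ) (hK : 0 < K) (q : ℝ) (hq : 0 ≤ q) (hm : 0 < m)
    (Vsc : Fin K → 𝓧' × ℝ → ℝ) (cfun : 𝓧' → ℝ)
    (hclip : ∀ (k : Fin K) (x : 𝓧') (y : ℝ), y ≤ cfun x → Vsc k (x, y) = Vsc k (x, cfun x))
    (j : Fin m) (v : ((Fin n₁ ⊕ Fin n₂) ⊕ Unit) → 𝓧' × ℝ)
    (t : {l : Fin m // l ≠ j} → 𝓧' × ℝ) :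
    ∑ o : Option (Fin n₂),
        Phi n₁ n₂ m K hK q Vsc cfun j (fun i => v (swapPerm n₁ n₂ o i)) t
      ≤ q * (n₂ + 1) / m := by
  classical
  set w : Option (Fin n₂) → 𝓧' × ℝ :=
    fun o => o.elim (v (Sum.inr ())) (fun i => v (Sum.inl (Sum.inr i))) with hw
  set prep : Fin n₁ → 𝓧' × ℝ := fun i => v (Sum.inl (Sum.inl i)) with hprep
  set calo : Option (Fin n₂) → Fin n₂ → 𝓧' × ℝ :=
    fun o i => if some i = o then w none else w (some i) with hcalo
  have hterm : ∀ o : Option (Fin n₂),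
      Phi n₁ n₂ m K hK q Vsc cfun j (fun i => v (swapPerm n₁ n₂ o i)) t
        = PhiAux n₁ n₂ m K hK q Vsc cfun j prep (calo o) (w o) t := by
    intro o
    have h0 : Phi n₁ n₂ m K hK q Vsc cfun j (fun i => v (swapPerm n₁ n₂ o i)) t
        = PhiAux n₁ n₂ m K hK q Vsc cfun j
            (fun i => v (swapPerm n₁ n₂ o (Sum.inl (Sum.inl i))))
            (fun i => v (swapPerm n₁ n₂ o (Sum.inl (Sum.inr i))))
            (v (swapPerm n₁ n₂ o (Sum.inr ()))) t := rfl
    have h1 : (fun i => v (swapPerm n₁ n₂ o (Sum.inl (Sum.inl i)))) = prep := by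
      funext i
      cases o with
      | none => rfl
      | some i' =>
          simp only [swapPerm, Option.elim]
          rw [Equiv.swap_apply_of_ne_of_ne (by simp) (by simp)]
    have h2 : (fun i => v (swapPerm n₁ n₂ o (Sum.inl (Sum.inr i)))) = calo o := by
      funext i
      cases o with
      | none => simp [swapPerm, hcalo, hw]
      | some i' =>
          by_cases h : i = i'
          · subst h
            simp only [swapPerm, Option.elim]
            rw [Equiv.swap_apply_right]
            simp [hcalo, hw]
          · simp only [swapPerm, Option.elim]
            rw [Equiv.swap_apply_of_ne_of_ne (by simp) (by simp [h])]
            simp [hcalo, hw, h]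
    have h3 : v (swapPerm n₁ n₂ o (Sum.inr ())) = w o := by
      cases o with
      | none => rfl
      | some i' =>
          simp only [swapPerm, Option.elim]
          rw [Equiv.swap_apply_left]
          rfl
    rw [h0, h1, h2, h3]
  set s : Fin K → Option (Fin n₂) → ℝ := fun k a => Vsc k (w a) with hs
  have hconf : ∀ o, (w o).2 ≤ cfun (w o).1 → ∀ (k : Fin K) (a : Option (Fin n₂)),
      Vsc k (combine (calo o) (testOf cfun j (w o) t j) a) = s k (Equiv.swap none o a) := by
    intro o ho k a
    cases a with
    | none =>
        show Vsc k (testOf cfun j (w o) t j) = s k (Equiv.swap none o none)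
        rw [testOf_same, Equiv.swap_apply_left]
        exact (hclip k (w o).1 (w o).2 ho).symm
    | some i =>
        show Vsc k (calo o i) = s k (Equiv.swap none o (some i))
        by_cases h : some i = o
        · rw [← h]
          have hc : calo (some i) i = w none := by simp [hcalo]
          rw [hc, Equiv.swap_apply_right]
        · have hc : calo o i = w (some i) := by simp [hcalo, h]
          rw [hc, Equiv.swap_apply_of_ne_of_ne (by simp) h]
  have hcongK : ∀ o o', (w o).2 ≤ cfun (w o).1 → (w o').2 ≤ cfun (w o').1 →
      mselKhat n₂ m K hK q Vsc (calo o) (testOf cfun j (w o) t) j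
        = mselKhat n₂ m K hK q Vsc (calo o') (testOf cfun j (w o') t) j := by
    intro o o' ho ho'
    refine mselKhat_congr Vsc hK q ((Equiv.swap none o).trans (Equiv.swap none o'))
      (fun k a => ?_) (fun k l hl => by rw [testOf_ne cfun hl, testOf_ne cfun hl])
    rw [hconf o ho k a, hconf o' ho' k _]
    congr 1
    rw [Equiv.trans_apply, Equiv.swap_apply_self]
  have hcongR : ∀ o o', (w o).2 ≤ cfun (w o).1 → (w o').2 ≤ cfun (w o').1 →
      mselR n₁ n₂ m K hK q Vsc prep (calo o) (testOf cfun j (w o) t) j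
        = mselR n₁ n₂ m K hK q Vsc prep (calo o') (testOf cfun j (w o') t) j := by
    intro o o' ho ho'
    refine mselR_congr Vsc n₁ hK q prep prep ((Equiv.swap none o).trans (Equiv.swap none o'))
      (fun k a => ?_) (fun k l hl => by rw [testOf_ne cfun hl, testOf_ne cfun hl])
    rw [hconf o ho k a, hconf o' ho' k _]
    congr 1
    rw [Equiv.trans_apply, Equiv.swap_apply_self]
  have hpv : ∀ o, (w o).2 ≤ cfun (w o).1 →
      pvals (mselV n₁ n₂ m K hK q Vsc) prep (calo o) (testOf cfun j (w o) t) j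
        = (Set.ncard {b : Option (Fin n₂) |
            s (mselKhat n₂ m K hK q Vsc (calo o) (testOf cfun j (w o) t) j) b
              ≤ s (mselKhat n₂ m K hK q Vsc (calo o) (testOf cfun j (w o) t) j) o} : ℝ)
          / (n₂ + 1) := by
    intro o ho
    rw [pvals_mselV_eq]
    set kh := mselKhat n₂ m K hK q Vsc (calo o) (testOf cfun j (w o) t) j with hkh
    have hth : Vsc kh (testOf cfun j (w o) t j) = s kh o := by
      rw [testOf_same]
      exact (hclip _ (w o).1 (w o).2 ho).symm
    have hX : {a : Option (Fin n₂) |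
        Vsc kh (combine (calo o) (testOf cfun j (w o) t j) a)
          ≤ Vsc kh (testOf cfun j (w o) t j)}
        = {a : Option (Fin n₂) | s kh (Equiv.swap none o a) ≤ s kh o} := by
      ext a
      rw [Set.mem_setOf_eq, Set.mem_setOf_eq, hconf o ho kh a, hth]
    rw [hX, ncard_comp_equiv (Equiv.swap none o) (fun b => s kh b ≤ s kh o)]
  by_cases hne : ∃ o : Option (Fin n₂), (w o).2 ≤ cfun (w o).1
  · obtain ⟨o₀, ho₀⟩ := hne
    set kb := mselKhat n₂ m K hK q Vsc (calo o₀) (testOf cfun j (w o₀) t) j with hkb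
    set Rb := mselR n₁ n₂ m K hK q Vsc prep (calo o₀) (testOf cfun j (w o₀) t) j with hRb
    have hRb0 : 0 ≤ Rb := by rw [hRb]; unfold mselR; exact Nat.cast_nonneg _
    set T : ℝ := q * (n₂ + 1) * Rb / m with hT
    have hT0 : 0 ≤ T := by
      rw [hT]
      exact div_nonneg (mul_nonneg (mul_nonneg hq (by positivity)) hRb0) (Nat.cast_nonneg m)
    have hmax : (0:ℝ) < max 1 Rb := lt_of_lt_of_le one_pos (le_max_left _ _)
    have hstep : ∀ o : Option (Fin n₂),
        PhiAux n₁ n₂ m K hK q Vsc cfun j prep (calo o) (w o) t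
          ≤ (if (Set.ncard {b : Option (Fin n₂) | s kb b ≤ s kb o} : ℝ) ≤ T
              then (1:ℝ) else 0) / max 1 Rb := by
      intro o
      by_cases ho : (w o).2 ≤ cfun (w o).1
      · unfold PhiAux
        rw [if_pos ho, one_mul]
        have e1 : mselKhat n₂ m K hK q Vsc (calo o) (testOf cfun j (w o) t) j = kb :=
          hcongK o o₀ ho ho₀
        have e2 : mselR n₁ n₂ m K hK q Vsc prep (calo o) (testOf cfun j (w o) t) j = Rb :=
          hcongR o o₀ ho ho₀
        simp only [hpv o ho, e1, e2]
        have himp : ((Set.ncard {b : Option (Fin n₂) | s kb b ≤ s kb o} : ℝ) / (n₂ + 1)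
            ≤ q * Rb / m) → ((Set.ncard {b : Option (Fin n₂) | s kb b ≤ s kb o} : ℝ) ≤ T) := by
          intro h
          rw [hT]
          have hn : (0:ℝ) < (n₂ : ℝ) + 1 := by positivity
          calc (Set.ncard {b : Option (Fin n₂) | s kb b ≤ s kb o} : ℝ)
              = ((Set.ncard {b : Option (Fin n₂) | s kb b ≤ s kb o} : ℝ) / ((n₂ : ℝ) + 1))
                  * ((n₂ : ℝ) + 1) := by field_simp
            _ ≤ (q * Rb / m) * ((n₂ : ℝ) + 1) := mul_le_mul_of_nonneg_right h (le_of_lt hn)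
            _ = q * ((n₂ : ℝ) + 1) * Rb / m := by ring
        by_cases hp : (Set.ncard {b : Option (Fin n₂) | s kb b ≤ s kb o} : ℝ) / ((n₂ : ℝ) + 1)
            ≤ q * Rb / m
        · rw [if_pos hp, if_pos (himp hp)]
        · rw [if_neg hp, zero_div]
          exact div_nonneg (by split <;> norm_num) (le_of_lt hmax)
      · unfold PhiAux
        rw [if_neg ho, zero_mul]
        exact div_nonneg (by split <;> norm_num) (le_of_lt hmax)
    calc ∑ o : Option (Fin n₂),
          Phi n₁ n₂ m K hK q Vsc cfun j (fun i => v (swapPerm n₁ n₂ o i)) t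
        = ∑ o : Option (Fin n₂), PhiAux n₁ n₂ m K hK q Vsc cfun j prep (calo o) (w o) t :=
          Finset.sum_congr rfl (fun o _ => hterm o)
      _ ≤ ∑ o : Option (Fin n₂),
            (if (Set.ncard {b : Option (Fin n₂) | s kb b ≤ s kb o} : ℝ) ≤ T
              then (1:ℝ) else 0) / max 1 Rb :=
          Finset.sum_le_sum (fun o _ => hstep o)
      _ = (∑ o : Option (Fin n₂),
            if (Set.ncard {b : Option (Fin n₂) | s kb b ≤ s kb o} : ℝ) ≤ T
              then (1:ℝ) else 0) / max 1 Rb := by rw [Finset.sum_div]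
      _ = ((Set.ncard {o : Option (Fin n₂) |
            (Set.ncard {b : Option (Fin n₂) | s kb b ≤ s kb o} : ℝ) ≤ T} : ℕ) : ℝ)
            / max 1 Rb := by
          congr 1
          rw [ncard_setOf_eq_sum, Nat.cast_sum]
          exact (Finset.sum_congr rfl (fun o _ => by split <;> simp)).symm
      _ ≤ T / max 1 Rb := by
          gcongr
          exact ncard_rank_le (s kb) T hT0
      _ ≤ q * (n₂ + 1) / m := by
          rw [div_le_iff₀ hmax, hT]
          have hre : q * ((n₂ : ℝ) + 1) * Rb / ↑m = (q * ((n₂ : ℝ) + 1) / ↑m) * Rb := by ring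
          rw [hre]
          exact mul_le_mul_of_nonneg_left (le_max_right 1 Rb)
            (div_nonneg (mul_nonneg hq (by positivity)) (Nat.cast_nonneg m))
  · push_neg at hne
    have hzero : ∀ o : Option (Fin n₂),
        Phi n₁ n₂ m K hK q Vsc cfun j (fun i => v (swapPerm n₁ n₂ o i)) t = 0 := by
      intro o
      rw [hterm o]
      unfold PhiAux
      rw [if_neg (not_le.mpr (hne o)), zero_mul]
    rw [Finset.sum_congr rfl (fun o _ => hzero o), Finset.sum_const, smul_zero]
    exact div_nonneg (mul_nonneg hq (by positivity)) (Nat.cast_nonneg m)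

end CoreSum

section Prune

open Classical in
lemma prune_integral {m : ℕ} (j : Fin m) (Rj : ℝ) (hRj : 0 ≤ Rj)
    (F : ℝ → Set (Fin m)) (P : Prop)
    (hF : ∀ ⦃a b : ℝ⦄, a ≤ b → F b ⊆ F a)
    (hmem : ∀ x, j ∈ F x → (x * Rj ≤ (Set.ncard (F x) : ℝ) ∧ P)) :
    ∫ x in Set.Icc (0:ℝ) 1,
        (if j ∈ F x then (1:ℝ) else 0) / max 1 ((Set.ncard (F x) : ℝ))
      ≤ (if P then (1:ℝ) else 0) / max 1 Rj := by
  classical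
  have hmaxR : (0:ℝ) < max 1 Rj := lt_of_lt_of_le one_pos (le_max_left _ _)
  by_cases hP : P
  swap
  · have hnone : ∀ x, ((if j ∈ F x then (1:ℝ) else 0) / max 1 ((Set.ncard (F x) : ℝ))) = 0 := by
      intro x
      have : j ∉ F x := fun hj => hP ((hmem x hj).2)
      simp [this]
    calc ∫ x in Set.Icc (0:ℝ) 1,
          (if j ∈ F x then (1:ℝ) else 0) / max 1 ((Set.ncard (F x) : ℝ))
        = ∫ _x in Set.Icc (0:ℝ) 1, (0:ℝ) := by
          exact integral_congr_ae (Filter.Eventually.of_forall hnone)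
      _ = 0 := integral_zero _ _
      _ ≤ _ := by positivity
  · rw [if_pos hP]
    set E := {x : ℝ | x ∈ Set.Icc (0:ℝ) 1 ∧ j ∈ F x} with hE
    by_cases hEne : E.Nonempty
    · set u := sSup E with hu
      have hbdd : BddAbove E := ⟨1, fun x hx => hx.1.2⟩
      have hub : ∀ x ∈ E, x ≤ u := fun x hx => le_csSup hbdd hx
      have hu0 : 0 ≤ u := le_trans (hEne.choose_spec.1.1) (hub _ hEne.choose_spec)
      have hu1 : u ≤ 1 := csSup_le hEne (fun x hx => hx.1.2)
      have hkey : ∀ x ∈ E, u * Rj ≤ (Set.ncard (F x) : ℝ) := by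
        intro x hx
        have hall : ∀ y ∈ E, y * Rj ≤ (Set.ncard (F x) : ℝ) := by
          intro y hy
          rcases le_total x y with hxy | hyx
          · refine ((hmem y hy.2).1).trans ?_
            exact_mod_cast Set.ncard_le_ncard (hF hxy) (Set.toFinite _)
          · exact (mul_le_mul_of_nonneg_right hyx hRj).trans (hmem x hx.2).1
        rcases eq_or_lt_of_le hRj with h0 | h0
        · rw [← h0, mul_zero]; exact Nat.cast_nonneg _
        · have hud : u ≤ (Set.ncard (F x) : ℝ) / Rj :=
            csSup_le hEne (fun y hy => (le_div_iff₀ h0).2 (hall y hy))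
          calc u * Rj ≤ ((Set.ncard (F x) : ℝ) / Rj) * Rj :=
                mul_le_mul_of_nonneg_right hud hRj
            _ = (Set.ncard (F x) : ℝ) := by field_simp
      have hmaxu : (0:ℝ) < max 1 (u * Rj) := lt_of_lt_of_le one_pos (le_max_left _ _)
      have hfg : ∀ x ∈ Set.Icc (0:ℝ) 1,
          (if j ∈ F x then (1:ℝ) else 0) / max 1 ((Set.ncard (F x) : ℝ))
            ≤ Set.indicator (Set.Icc 0 u) (fun _ => (max 1 (u * Rj))⁻¹) x := by
        intro x hx
        by_cases hj : j ∈ F x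
        · have hxE : x ∈ E := ⟨hx, hj⟩
          have hxu : x ∈ Set.Icc (0:ℝ) u := ⟨hx.1, hub x hxE⟩
          rw [Set.indicator_of_mem hxu, if_pos hj, div_eq_mul_inv, one_mul]
          exact inv_anti₀ hmaxu (max_le_max le_rfl (hkey x hxE))
        · rw [if_neg hj, zero_div]
          exact Set.indicator_nonneg
            (fun _ _ => inv_nonneg.2 (le_trans zero_le_one (le_max_left _ _))) x
      have hint : Integrable (Set.indicator (Set.Icc 0 u) (fun _ => (max 1 (u * Rj))⁻¹))
          ((volume : Measure ℝ).restrict (Set.Icc 0 1)) :=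
        (integrable_const _).indicator measurableSet_Icc
      have h1 : ∫ x in Set.Icc (0:ℝ) 1,
          (if j ∈ F x then (1:ℝ) else 0) / max 1 ((Set.ncard (F x) : ℝ))
          ≤ ∫ x in Set.Icc (0:ℝ) 1,
              Set.indicator (Set.Icc 0 u) (fun _ => (max 1 (u * Rj))⁻¹) x := by
        refine integral_mono_of_nonneg (Filter.Eventually.of_forall fun x => ?_) hint ?_
        · exact div_nonneg (by split <;> norm_num)
            (le_trans zero_le_one (le_max_left _ _))
        · exact (ae_restrict_iff' measurableSet_Icc).2 (Filter.Eventually.of_forall hfg)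
      have h2 : ∫ x in Set.Icc (0:ℝ) 1,
          Set.indicator (Set.Icc 0 u) (fun _ => (max 1 (u * Rj))⁻¹) x
          = (((volume : Measure ℝ).restrict (Set.Icc 0 1)) (Set.Icc 0 u)).toReal
              * (max 1 (u * Rj))⁻¹ := by
        rw [integral_indicator_const _ measurableSet_Icc, smul_eq_mul, measureReal_def]
      have h3 : (((volume : Measure ℝ).restrict (Set.Icc 0 1)) (Set.Icc 0 u)).toReal ≤ u := by
        rw [Measure.restrict_apply measurableSet_Icc]
        calc (volume (Set.Icc (0:ℝ) u ∩ Set.Icc 0 1)).toReal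
            ≤ (volume (Set.Icc (0:ℝ) u)).toReal := by
              apply ENNReal.toReal_mono
              · simp [Real.volume_Icc]
              · exact measure_mono Set.inter_subset_left
          _ = u := by
              rw [Real.volume_Icc, ENNReal.toReal_ofReal (by linarith)]
              ring
      have h4 : u * (max 1 (u * Rj))⁻¹ ≤ 1 / max 1 Rj := by
        rw [← div_eq_mul_inv, div_le_div_iff₀ hmaxu hmaxR, one_mul]
        rcases le_total Rj 1 with h | h
        · rw [max_eq_left h, mul_one]
          exact hu1.trans (le_max_left _ _)
        · rw [max_eq_right h]
          exact le_max_right _ _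
      calc ∫ x in Set.Icc (0:ℝ) 1,
            (if j ∈ F x then (1:ℝ) else 0) / max 1 ((Set.ncard (F x) : ℝ))
          ≤ ∫ x in Set.Icc (0:ℝ) 1,
              Set.indicator (Set.Icc 0 u) (fun _ => (max 1 (u * Rj))⁻¹) x := h1
        _ = (((volume : Measure ℝ).restrict (Set.Icc 0 1)) (Set.Icc 0 u)).toReal
              * (max 1 (u * Rj))⁻¹ := h2
        _ ≤ u * (max 1 (u * Rj))⁻¹ :=
            mul_le_mul_of_nonneg_right h3 (inv_nonneg.2 hmaxu.le)
        _ ≤ 1 / max 1 Rj := h4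
    · have hnone : ∀ x ∈ Set.Icc (0:ℝ) 1,
          ((if j ∈ F x then (1:ℝ) else 0) / max 1 ((Set.ncard (F x) : ℝ))) = 0 := by
        intro x hx
        have : j ∉ F x := fun hj => hEne ⟨x, hx, hj⟩
        simp [this]
      have hz : ∫ x in Set.Icc (0:ℝ) 1,
          (if j ∈ F x then (1:ℝ) else 0) / max 1 ((Set.ncard (F x) : ℝ)) = 0 := by
        rw [MeasureTheory.setIntegral_congr_fun measurableSet_Icc hnone]
        simp
      rw [hz]
      positivity

end Prune

/-! ### Factorisation through a countable code -/

section Code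

variable {𝓧' : Type*}

/-- Countable code determining all OptCS-MSel quantities. -/
abbrev MselCode (K m : ℕ) := (Fin K → Fin m → ℕ) × (Fin m → Fin K → Fin m → ℕ)

open Classical in
noncomputable def codeFn (n₂ m K : ℕ) (Vsc : Fin K → 𝓧' × ℝ → ℝ)
    (cal : Fin n₂ → 𝓧' × ℝ) (test : Fin m → 𝓧' × ℝ) : MselCode K m :=
  (fun k l => Set.ncard {i : Fin n₂ | Vsc k (cal i) ≤ Vsc k (test l)},
   fun j k l => if Vsc k (test j) ≤ Vsc k (test l) then 1 else 0)

open Classical in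
noncomputable def ptOfCode (n₂ m K : ℕ) (c : MselCode K m) (j : Fin m) (k : Fin K) :
    Fin m → ℝ :=
  fun l => if l = j then 0
    else ((c.1 k l : ℝ) + (if c.2 j k l = 1 then 1 else 0)) / (n₂ + 1)

noncomputable def khatOfCode (n₂ m K : ℕ) (hK : 0 < K) (q : ℝ) (c : MselCode K m)
    (j : Fin m) : Fin K :=
  argmaxFin hK (fun k => Set.ncard (bhSet m q (ptOfCode n₂ m K c j k)))

noncomputable def ROfCode (n₂ m K : ℕ) (hK : 0 < K) (q : ℝ) (c : MselCode K m)
    (j : Fin m) : ℕ :=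
  Set.ncard (bhSet m q (ptOfCode n₂ m K c j (khatOfCode n₂ m K hK q c j)))

noncomputable def pvalOfCode (n₂ m K : ℕ) (hK : 0 < K) (q : ℝ) (c : MselCode K m)
    (j : Fin m) : ℝ :=
  (1 + (c.1 (khatOfCode n₂ m K hK q c j) j : ℝ)) / (n₂ + 1)

variable {n₂ m K : ℕ} (Vsc : Fin K → 𝓧' × ℝ → ℝ)

lemma ptOfCode_codeFn (cal : Fin n₂ → 𝓧' × ℝ) (test : Fin m → 𝓧' × ℝ) (j : Fin m)
    (k : Fin K) :
    mselPtilde n₂ m K Vsc cal test j k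
      = ptOfCode n₂ m K (codeFn n₂ m K Vsc cal test) j k := by
  classical
  funext l
  unfold mselPtilde ptOfCode codeFn
  by_cases hl : l = j
  · simp [hl]
  · rw [if_neg hl, if_neg hl]
    by_cases hb : Vsc k (test j) ≤ Vsc k (test l) <;> simp [hb]

lemma khat_code (hK : 0 < K) (q : ℝ) (cal : Fin n₂ → 𝓧' × ℝ) (test : Fin m → 𝓧' × ℝ)
    (j : Fin m) :
    mselKhat n₂ m K hK q Vsc cal test j
      = khatOfCode n₂ m K hK q (codeFn n₂ m K Vsc cal test) j := by
  unfold mselKhat khatOfCode mselSel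
  congr 1
  funext k
  rw [ptOfCode_codeFn]

lemma R_code (n₁ : ℕ) (hK : 0 < K) (q : ℝ) (prep : Fin n₁ → 𝓧' × ℝ)
    (cal : Fin n₂ → 𝓧' × ℝ) (test : Fin m → 𝓧' × ℝ) (j : Fin m) :
    mselR n₁ n₂ m K hK q Vsc prep cal test j
      = (ROfCode n₂ m K hK q (codeFn n₂ m K Vsc cal test) j : ℝ) := by
  unfold mselR ROfCode mselSel
  rw [ptOfCode_codeFn, khat_code]

lemma pval_code (n₁ : ℕ) (hK : 0 < K) (q : ℝ) (prep : Fin n₁ → 𝓧' × ℝ)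
    (cal : Fin n₂ → 𝓧' × ℝ) (test : Fin m → 𝓧' × ℝ) (j : Fin m) :
    pvals (mselV n₁ n₂ m K hK q Vsc) prep cal test j
      = pvalOfCode n₂ m K hK q (codeFn n₂ m K Vsc cal test) j := by
  unfold pvals mselV pvalOfCode
  simp only [Sum.elim_inl, Sum.elim_inr]
  rw [khat_code]
  rfl

end Code

/-! ### Measurability lemmas -/

section Meas

variable {𝓧' : Type*} [MeasurableSpace 𝓧']

lemma measurable_ncard {α : Type*} [MeasurableSpace α] {ι : Type*} [Fintype ι]
    (p : ι → α → Prop) [∀ i a, Decidable (p i a)] (h : ∀ i, MeasurableSet {a | p i a}) :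
    Measurable (fun a => Set.ncard {i | p i a}) := by
  have heq : (fun a => Set.ncard {i | p i a}) = fun a => ∑ i : ι, if p i a then 1 else 0 := by
    funext a; exact ncard_setOf_eq_sum _
  rw [heq]
  exact Finset.measurable_sum _
    (fun i _ => Measurable.ite (h i) measurable_const measurable_const)

lemma measurable_findGreatest' {α : Type*} [MeasurableSpace α] (P : α → ℕ → Prop)
    [∀ a r, Decidable (P a r)] (N : ℕ) (h : ∀ r, MeasurableSet {a | P a r}) :
    Measurable (fun a => Nat.findGreatest (P a) N) := by
  induction N with
  | zero => simpa using measurable_const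
  | succ n ih =>
      have heq : (fun a => Nat.findGreatest (P a) (n + 1))
          = fun a => if P a (n + 1) then n + 1 else Nat.findGreatest (P a) n := by
        funext a; exact Nat.findGreatest_succ n
      rw [heq]
      exact Measurable.ite (h (n + 1)) measurable_const ih

lemma measurable_codeFn {α : Type*} [MeasurableSpace α] (n₂ m K : ℕ)
    (Vsc : Fin K → 𝓧' × ℝ → ℝ) (hVsc : ∀ k, Measurable (Vsc k))
    (cal : Fin n₂ → α → 𝓧' × ℝ) (test : Fin m → α → 𝓧' × ℝ)
    (hcal : ∀ i, Measurable (cal i)) (htest : ∀ l, Measurable (test l)) :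
    Measurable (fun a => codeFn n₂ m K Vsc (fun i => cal i a) (fun l => test l a)) := by
  classical
  unfold codeFn
  refine Measurable.prodMk ?_ ?_
  · refine measurable_pi_lambda _ fun k => measurable_pi_lambda _ fun l => ?_
    exact measurable_ncard _
      (fun i => measurableSet_le ((hVsc k).comp (hcal i)) ((hVsc k).comp (htest l)))
  · refine measurable_pi_lambda _ fun j => measurable_pi_lambda _ fun k =>
      measurable_pi_lambda _ fun l => ?_
    exact Measurable.ite
      (measurableSet_le ((hVsc k).comp (htest j)) ((hVsc k).comp (htest l)))
      measurable_const measurable_const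

open Classical in
/-- The per-`j` FDP contribution as a function of the code, null bit, and pruning variables. -/
noncomputable def gAux (n₂ m K : ℕ) (hK : 0 < K) (q : ℝ) (j : Fin m)
    (cb : MselCode K m × (Fin m → ℕ)) (x : Fin m → ℝ) : ℝ :=
  (if cb.2 j = 1 then (1:ℝ) else 0) *
    ((if j ∈ prunedSet m q (fun l => pvalOfCode n₂ m K hK q cb.1 l)
          (fun l => (ROfCode n₂ m K hK q cb.1 l : ℝ)) x then (1:ℝ) else 0) /
      ((max 1 (Set.ncard (prunedSet m q (fun l => pvalOfCode n₂ m K hK q cb.1 l)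
          (fun l => (ROfCode n₂ m K hK q cb.1 l : ℝ)) x)) : ℕ) : ℝ))

set_option maxHeartbeats 1000000 in
lemma measurable_prunedThreshold_lam (m : ℕ) (q : ℝ) (p R : Fin m → ℝ) :
    Measurable (fun x : Fin m → ℝ => prunedThreshold m q p R x) := by
  classical
  unfold prunedThreshold
  refine measurable_findGreatest'
    (fun (x : Fin m → ℝ) (r : ℕ) =>
      r ≤ Set.ncard {j : Fin m | p j ≤ q * R j / m ∧ x j * R j ≤ (r : ℝ)}) m
    (fun r => ?_)
  have hn : Measurable (fun x : Fin m → ℝ =>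
      Set.ncard {j : Fin m | p j ≤ q * R j / m ∧ x j * R j ≤ (r : ℝ)}) := by
    refine measurable_ncard _ (fun j => ?_)
    have heq : {x : Fin m → ℝ | p j ≤ q * R j / m ∧ x j * R j ≤ (r : ℝ)}
        = {x : Fin m → ℝ | p j ≤ q * R j / m} ∩ {x : Fin m → ℝ | x j * R j ≤ (r : ℝ)} := by
      ext x; exact Iff.rfl
    rw [heq]
    exact (MeasurableSet.const _).inter
      (measurableSet_le ((measurable_pi_apply j).mul_const _) measurable_const)
  have hpre : {x : Fin m → ℝ |
      r ≤ Set.ncard {j : Fin m | p j ≤ q * R j / m ∧ x j * R j ≤ (r : ℝ)}}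
      = (fun x : Fin m → ℝ =>
          Set.ncard {j : Fin m | p j ≤ q * R j / m ∧ x j * R j ≤ (r : ℝ)}) ⁻¹'
        (Set.Ici r) := rfl
  rw [hpre]
  exact hn MeasurableSpace.measurableSet_top

lemma measurableSet_mem_prunedSet_lam (m : ℕ) (q : ℝ) (p R : Fin m → ℝ) (j : Fin m) :
    MeasurableSet {x : Fin m → ℝ | j ∈ prunedSet m q p R x} := by
  have heq : {x : Fin m → ℝ | j ∈ prunedSet m q p R x}
      = {x : Fin m → ℝ | p j ≤ q * R j / m}
        ∩ {x : Fin m → ℝ | x j * R j ≤ ((prunedThreshold m q p R x : ℕ) : ℝ)} := by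
    ext x; exact Iff.rfl
  rw [heq]
  refine (MeasurableSet.const _).inter ?_
  exact measurableSet_le ((measurable_pi_apply j).mul_const _)
    ((measurable_of_countable (fun n : ℕ => (n : ℝ))).comp
      (measurable_prunedThreshold_lam m q p R))

lemma measurable_gAux (n₂ m K : ℕ) (hK : 0 < K) (q : ℝ) (j : Fin m) :
    Measurable (fun pr : (Fin m → ℝ) × (MselCode K m × (Fin m → ℕ)) =>
      gAux n₂ m K hK q j pr.2 pr.1) := by
  classical
  apply measurable_from_prod_countable_left
  intro cb
  show Measurable fun x : Fin m → ℝ => gAux n₂ m K hK q j cb x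
  unfold gAux
  set p : Fin m → ℝ := fun l => pvalOfCode n₂ m K hK q cb.1 l
  set R : Fin m → ℝ := fun l => (ROfCode n₂ m K hK q cb.1 l : ℝ)
  refine Measurable.mul measurable_const (Measurable.div ?_ ?_)
  · exact Measurable.ite (measurableSet_mem_prunedSet_lam m q p R j)
      measurable_const measurable_const
  · have hnc : Measurable (fun x : Fin m → ℝ => Set.ncard (prunedSet m q p R x)) := by
      refine measurable_ncard (fun j' x => j' ∈ prunedSet m q p R x) (fun j' => ?_)
      exact measurableSet_mem_prunedSet_lam m q p R j'
    exact (measurable_of_countable (fun n : ℕ => ((max 1 n : ℕ) : ℝ))).comp hnc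

open Classical in
/-- `Phi` as a function of the code and null bit. -/
noncomputable def phiCode (n₂ m K : ℕ) (hK : 0 < K) (q : ℝ) (mm : ℕ) (j : Fin m)
    (cb : MselCode K m × ℕ) : ℝ :=
  (if cb.2 = 1 then (1:ℝ) else 0) *
    ((if pvalOfCode n₂ m K hK q cb.1 j
          ≤ q * (ROfCode n₂ m K hK q cb.1 j : ℝ) / mm then (1:ℝ) else 0) /
      max 1 ((ROfCode n₂ m K hK q cb.1 j : ℝ)))

lemma Phi_eq_phiCode (n₁ n₂ m K : ℕ) (hK : 0 < K) (q : ℝ) (Vsc : Fin K → 𝓧' × ℝ → ℝ)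
    (cfun : 𝓧' → ℝ) (j : Fin m) (v : ((Fin n₁ ⊕ Fin n₂) ⊕ Unit) → 𝓧' × ℝ)
    (t : {l : Fin m // l ≠ j} → 𝓧' × ℝ) :
    Phi n₁ n₂ m K hK q Vsc cfun j v t
      = phiCode n₂ m K hK q m j
          (codeFn n₂ m K Vsc (fun i => v (Sum.inl (Sum.inr i)))
            (testOf cfun j (v (Sum.inr ())) t),
           if (v (Sum.inr ())).2 ≤ cfun (v (Sum.inr ())).1 then 1 else 0) := by
  classical
  unfold Phi PhiAux phiCode
  rw [pval_code Vsc n₁ hK q _ _ _ j, R_code Vsc n₁ hK q _ _ _ j]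
  by_cases hnull : (v (Sum.inr ())).2 ≤ cfun (v (Sum.inr ())).1 <;> simp [hnull]

lemma measurable_Phi (n₁ n₂ m K : ℕ) (hK : 0 < K) (q : ℝ) (Vsc : Fin K → 𝓧' × ℝ → ℝ)
    (hVsc : ∀ k, Measurable (Vsc k)) (cfun : 𝓧' → ℝ) (hcfun : Measurable cfun) (j : Fin m) :
    Measurable (fun vt : (((Fin n₁ ⊕ Fin n₂) ⊕ Unit) → 𝓧' × ℝ)
        × ({l : Fin m // l ≠ j} → 𝓧' × ℝ) =>
      Phi n₁ n₂ m K hK q Vsc cfun j vt.1 vt.2) := by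
  classical
  have heq : (fun vt : (((Fin n₁ ⊕ Fin n₂) ⊕ Unit) → 𝓧' × ℝ)
        × ({l : Fin m // l ≠ j} → 𝓧' × ℝ) =>
      Phi n₁ n₂ m K hK q Vsc cfun j vt.1 vt.2)
      = fun vt => phiCode n₂ m K hK q m j
          (codeFn n₂ m K Vsc (fun i => vt.1 (Sum.inl (Sum.inr i)))
            (testOf cfun j (vt.1 (Sum.inr ())) vt.2),
           if (vt.1 (Sum.inr ())).2 ≤ cfun (vt.1 (Sum.inr ())).1 then 1 else 0) := by
    funext vt
    exact Phi_eq_phiCode n₁ n₂ m K hK q Vsc cfun j vt.1 vt.2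
  rw [heq]
  have hz : Measurable (fun vt : (((Fin n₁ ⊕ Fin n₂) ⊕ Unit) → 𝓧' × ℝ)
      × ({l : Fin m // l ≠ j} → 𝓧' × ℝ) => vt.1 (Sum.inr ())) :=
    (measurable_pi_apply _).comp measurable_fst
  refine (measurable_of_countable
    (fun cb : MselCode K m × ℕ => phiCode n₂ m K hK q m j cb)).comp
    (Measurable.prodMk ?_ ?_)
  · refine measurable_codeFn n₂ m K Vsc hVsc _ _
      (fun i => (measurable_pi_apply _).comp measurable_fst) (fun l => ?_)
    by_cases hl : l = j
    · subst hl
      have heq2 : (fun vt : (((Fin n₁ ⊕ Fin n₂) ⊕ Unit) → 𝓧' × ℝ)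
          × ({l' : Fin m // l' ≠ l} → 𝓧' × ℝ) => testOf cfun l (vt.1 (Sum.inr ())) vt.2 l)
          = fun vt => ((vt.1 (Sum.inr ())).1, cfun (vt.1 (Sum.inr ())).1) := by
        funext vt; rw [testOf_same]
      rw [heq2]
      exact Measurable.prodMk (measurable_fst.comp hz) (hcfun.comp (measurable_fst.comp hz))
    · have heq2 : (fun vt : (((Fin n₁ ⊕ Fin n₂) ⊕ Unit) → 𝓧' × ℝ)
          × ({l' : Fin m // l' ≠ j} → 𝓧' × ℝ) => testOf cfun j (vt.1 (Sum.inr ())) vt.2 l)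
          = fun vt => vt.2 ⟨l, hl⟩ := by
        funext vt; rw [testOf_ne cfun hl]
      rw [heq2]
      exact (measurable_pi_apply _).comp measurable_snd
  · exact Measurable.ite (measurableSet_le (measurable_snd.comp hz)
      (hcfun.comp (measurable_fst.comp hz))) measurable_const measurable_const

end Meas

/-! ### The per-j FDP functions and their bounds -/

section GH

variable {𝓧' : Type*} [MeasurableSpace 𝓧']

open Classical in
noncomputable def gjFn (n₁ n₂ m K : ℕ) (hK : 0 < K) (q : ℝ) (Vsc : Fin K → 𝓧' × ℝ → ℝ)
    (cfun : 𝓧' → ℝ) (j : Fin m)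
    (Dx : ((Fin n₁ → 𝓧' × ℝ) × (Fin n₂ → 𝓧' × ℝ) × (Fin m → 𝓧') × (Fin m → ℝ))
      × (Fin m → ℝ)) : ℝ :=
  gAux n₂ m K hK q j
    (codeFn n₂ m K Vsc Dx.1.2.1 (fun l => (Dx.1.2.2.1 l, cfun (Dx.1.2.2.1 l))),
     fun l => if Dx.1.2.2.2 l ≤ cfun (Dx.1.2.2.1 l) then 1 else 0)
    Dx.2

variable (n₁ n₂ m K : ℕ) (hK : 0 < K) (q : ℝ) (Vsc : Fin K → 𝓧' × ℝ → ℝ) (cfun : 𝓧' → ℝ)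

open Classical in
lemma gjFn_eval (j : Fin m)
    (D : (Fin n₁ → 𝓧' × ℝ) × (Fin n₂ → 𝓧' × ℝ) × (Fin m → 𝓧') × (Fin m → ℝ))
    (x : Fin m → ℝ) :
    gjFn n₁ n₂ m K hK q Vsc cfun j (D, x)
      = (if D.2.2.2 j ≤ cfun (D.2.2.1 j) then (1:ℝ) else 0) *
        ((if j ∈ prunedSet m q
              (pvals (mselV n₁ n₂ m K hK q Vsc) D.1 D.2.1
                (fun l => (D.2.2.1 l, cfun (D.2.2.1 l))))
              (fun l => mselR n₁ n₂ m K hK q Vsc D.1 D.2.1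
                (fun l' => (D.2.2.1 l', cfun (D.2.2.1 l'))) l)
              x then (1:ℝ) else 0) /
          ((max 1 (Set.ncard (prunedSet m q
              (pvals (mselV n₁ n₂ m K hK q Vsc) D.1 D.2.1
                (fun l => (D.2.2.1 l, cfun (D.2.2.1 l))))
              (fun l => mselR n₁ n₂ m K hK q Vsc D.1 D.2.1
                (fun l' => (D.2.2.1 l', cfun (D.2.2.1 l'))) l)
              x)) : ℕ) : ℝ)) := by
  classical
  unfold gjFn gAux
  have hp : (fun l => pvalOfCode n₂ m K hK q
      (codeFn n₂ m K Vsc D.2.1 (fun l' => (D.2.2.1 l', cfun (D.2.2.1 l')))) l)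
      = pvals (mselV n₁ n₂ m K hK q Vsc) D.1 D.2.1
          (fun l => (D.2.2.1 l, cfun (D.2.2.1 l))) := by
    funext l
    exact (pval_code Vsc n₁ hK q D.1 _ _ l).symm
  have hR : (fun l => ((ROfCode n₂ m K hK q
      (codeFn n₂ m K Vsc D.2.1 (fun l' => (D.2.2.1 l', cfun (D.2.2.1 l')))) l : ℕ) : ℝ))
      = fun l => mselR n₁ n₂ m K hK q Vsc D.1 D.2.1
          (fun l' => (D.2.2.1 l', cfun (D.2.2.1 l'))) l := by
    funext l
    exact (R_code Vsc n₁ hK q D.1 _ _ l).symm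
  rw [hp, hR]
  by_cases hnull : D.2.2.2 j ≤ cfun (D.2.2.1 j) <;> simp [hnull]

open Classical in
lemma gAux_nonneg (j : Fin m) (cb : MselCode K m × (Fin m → ℕ)) (x : Fin m → ℝ) :
    0 ≤ gAux n₂ m K hK q j cb x := by
  unfold gAux
  have h1 : (1:ℝ) ≤ ((max 1 (Set.ncard (prunedSet m q
      (fun l => pvalOfCode n₂ m K hK q cb.1 l)
      (fun l => (ROfCode n₂ m K hK q cb.1 l : ℝ)) x)) : ℕ) : ℝ) := by
    exact_mod_cast Nat.le_max_left 1 _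
  refine mul_nonneg (by split <;> norm_num) (div_nonneg (by split <;> norm_num) (by linarith))

open Classical in
lemma gAux_le_one (j : Fin m) (cb : MselCode K m × (Fin m → ℕ)) (x : Fin m → ℝ) :
    gAux n₂ m K hK q j cb x ≤ 1 := by
  unfold gAux
  have h1 : (1:ℝ) ≤ ((max 1 (Set.ncard (prunedSet m q
      (fun l => pvalOfCode n₂ m K hK q cb.1 l)
      (fun l => (ROfCode n₂ m K hK q cb.1 l : ℝ)) x)) : ℕ) : ℝ) := by
    exact_mod_cast Nat.le_max_left 1 _
  have h2 : ((if j ∈ prunedSet m q (fun l => pvalOfCode n₂ m K hK q cb.1 l)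
      (fun l => (ROfCode n₂ m K hK q cb.1 l : ℝ)) x then (1:ℝ) else 0) /
      ((max 1 (Set.ncard (prunedSet m q (fun l => pvalOfCode n₂ m K hK q cb.1 l)
      (fun l => (ROfCode n₂ m K hK q cb.1 l : ℝ)) x)) : ℕ) : ℝ)) ≤ 1 := by
    rw [div_le_one (by linarith)]
    refine le_trans (by split <;> norm_num) h1
  have h3 : (0:ℝ) ≤ ((if j ∈ prunedSet m q (fun l => pvalOfCode n₂ m K hK q cb.1 l)
      (fun l => (ROfCode n₂ m K hK q cb.1 l : ℝ)) x then (1:ℝ) else 0) /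
      ((max 1 (Set.ncard (prunedSet m q (fun l => pvalOfCode n₂ m K hK q cb.1 l)
      (fun l => (ROfCode n₂ m K hK q cb.1 l : ℝ)) x)) : ℕ) : ℝ)) :=
    div_nonneg (by split <;> norm_num) (by linarith)
  calc (if cb.2 j = 1 then (1:ℝ) else 0) * _ ≤ 1 * _ :=
        mul_le_mul_of_nonneg_right (by split <;> norm_num) h3
    _ ≤ 1 := by rw [one_mul]; exact h2

lemma measurable_gjFn (hVsc : ∀ k, Measurable (Vsc k)) (hcfun : Measurable cfun)
    (j : Fin m) : Measurable (gjFn n₁ n₂ m K hK q Vsc cfun j) := by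
  unfold gjFn
  refine (measurable_gAux n₂ m K hK q j).comp
    (Measurable.prodMk measurable_snd (Measurable.prodMk ?_ ?_))
  · exact measurable_codeFn n₂ m K Vsc hVsc _ _
      (fun i => (measurable_pi_apply i).comp measurable_fst.snd.fst)
      (fun l => Measurable.prodMk
        ((measurable_pi_apply l).comp measurable_fst.snd.snd.fst)
        (hcfun.comp ((measurable_pi_apply l).comp measurable_fst.snd.snd.fst)))
  · refine measurable_pi_lambda _ fun l => ?_
    have hYl : Measurable (fun Dx : ((Fin n₁ → 𝓧' × ℝ) × (Fin n₂ → 𝓧' × ℝ)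
        × (Fin m → 𝓧') × (Fin m → ℝ)) × (Fin m → ℝ) => Dx.1.2.2.2 l) :=
      (measurable_pi_apply l).comp measurable_fst.snd.snd.snd
    have hXl : Measurable (fun Dx : ((Fin n₁ → 𝓧' × ℝ) × (Fin n₂ → 𝓧' × ℝ)
        × (Fin m → 𝓧') × (Fin m → ℝ)) × (Fin m → ℝ) => Dx.1.2.2.1 l) :=
      (measurable_pi_apply l).comp measurable_fst.snd.snd.fst
    exact Measurable.ite (measurableSet_le hYl (hcfun.comp hXl))
      measurable_const measurable_const

/-- The dominating function `H_j` of the data tuple. -/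
noncomputable def HjFn (j : Fin m)
    (D : (Fin n₁ → 𝓧' × ℝ) × (Fin n₂ → 𝓧' × ℝ) × (Fin m → 𝓧') × (Fin m → ℝ)) : ℝ :=
  Phi n₁ n₂ m K hK q Vsc cfun j
    (fun i => Sum.elim (Sum.elim D.1 D.2.1) (fun _ => (D.2.2.1 j, D.2.2.2 j)) i)
    (fun l => (D.2.2.1 l.1, cfun (D.2.2.1 l.1)))

lemma HjFn_eval (j : Fin m)
    (D : (Fin n₁ → 𝓧' × ℝ) × (Fin n₂ → 𝓧' × ℝ) × (Fin m → 𝓧') × (Fin m → ℝ)) :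
    HjFn n₁ n₂ m K hK q Vsc cfun j D
      = (if D.2.2.2 j ≤ cfun (D.2.2.1 j) then (1:ℝ) else 0) *
        ((if pvals (mselV n₁ n₂ m K hK q Vsc) D.1 D.2.1
              (fun l => (D.2.2.1 l, cfun (D.2.2.1 l))) j
            ≤ q * mselR n₁ n₂ m K hK q Vsc D.1 D.2.1
              (fun l => (D.2.2.1 l, cfun (D.2.2.1 l))) j / m
          then (1:ℝ) else 0) /
        max 1 (mselR n₁ n₂ m K hK q Vsc D.1 D.2.1
          (fun l => (D.2.2.1 l, cfun (D.2.2.1 l))) j)) := by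
  have htest : testOf cfun j ((D.2.2.1 j, D.2.2.2 j) : 𝓧' × ℝ)
      (fun l => (D.2.2.1 l.1, cfun (D.2.2.1 l.1)))
      = fun l => (D.2.2.1 l, cfun (D.2.2.1 l)) := by
    funext l
    by_cases h : l = j
    · subst h; rw [testOf_same]
    · rw [testOf_ne cfun h]
  unfold HjFn Phi PhiAux
  simp only [Sum.elim_inl, Sum.elim_inr, htest]
  rfl

lemma HjFn_nonneg (j : Fin m) (D) : 0 ≤ HjFn n₁ n₂ m K hK q Vsc cfun j D := by
  unfold HjFn Phi
  exact PhiAux_nonneg _ _ _ _ _ _ _ _ _ _ _ _ _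

lemma HjFn_le_one (j : Fin m) (D) : HjFn n₁ n₂ m K hK q Vsc cfun j D ≤ 1 := by
  unfold HjFn Phi
  exact PhiAux_le_one _ _ _ _ _ _ _ _ _ _ _ _ _

lemma measurable_HjFn (hVsc : ∀ k, Measurable (Vsc k)) (hcfun : Measurable cfun)
    (j : Fin m) : Measurable (HjFn n₁ n₂ m K hK q Vsc cfun j) := by
  refine (measurable_Phi n₁ n₂ m K hK q Vsc hVsc cfun hcfun j).comp
    (Measurable.prodMk ?_ ?_)
  · refine measurable_pi_lambda _ fun i => ?_
    rcases i with (a | b) | u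
    · exact (measurable_pi_apply a).comp measurable_fst
    · exact (measurable_pi_apply b).comp measurable_snd.fst
    · exact Measurable.prodMk ((measurable_pi_apply j).comp measurable_snd.snd.fst)
        ((measurable_pi_apply j).comp measurable_snd.snd.snd)
  · exact measurable_pi_lambda _ fun l => Measurable.prodMk
      ((measurable_pi_apply l.1).comp measurable_snd.snd.fst)
      (hcfun.comp ((measurable_pi_apply l.1).comp measurable_snd.snd.fst))

lemma mselR_fn_nonneg (j : Fin m)
    (D : (Fin n₁ → 𝓧' × ℝ) × (Fin n₂ → 𝓧' × ℝ) × (Fin m → 𝓧') × (Fin m → ℝ)) :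
    0 ≤ mselR n₁ n₂ m K hK q Vsc D.1 D.2.1 (fun l => (D.2.2.1 l, cfun (D.2.2.1 l))) j := by
  unfold mselR
  exact Nat.cast_nonneg _

open Classical in
lemma gj_det_le (j : Fin m)
    (D : (Fin n₁ → 𝓧' × ℝ) × (Fin n₂ → 𝓧' × ℝ) × (Fin m → 𝓧') × (Fin m → ℝ)) :
    gjFn n₁ n₂ m K hK q Vsc cfun j (D, fun _ => (1:ℝ))
      ≤ HjFn n₁ n₂ m K hK q Vsc cfun j D := by
  classical
  rw [gjFn_eval, HjFn_eval]
  refine mul_le_mul_of_nonneg_left ?_ (by split <;> norm_num)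
  by_cases hj : j ∈ prunedSet m q
      (pvals (mselV n₁ n₂ m K hK q Vsc) D.1 D.2.1
        (fun l => (D.2.2.1 l, cfun (D.2.2.1 l))))
      (fun l => mselR n₁ n₂ m K hK q Vsc D.1 D.2.1
        (fun l' => (D.2.2.1 l', cfun (D.2.2.1 l'))) l)
      (fun _ => (1:ℝ))
  · obtain ⟨h1, h2⟩ := mem_prunedSet_imp hj
    have h1' : pvals (mselV n₁ n₂ m K hK q Vsc) D.1 D.2.1
        (fun l => (D.2.2.1 l, cfun (D.2.2.1 l))) j
        ≤ q * mselR n₁ n₂ m K hK q Vsc D.1 D.2.1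
          (fun l => (D.2.2.1 l, cfun (D.2.2.1 l))) j / m := h1
    have h2' : mselR n₁ n₂ m K hK q Vsc D.1 D.2.1
        (fun l => (D.2.2.1 l, cfun (D.2.2.1 l))) j
        ≤ (Set.ncard (prunedSet m q
          (pvals (mselV n₁ n₂ m K hK q Vsc) D.1 D.2.1
            (fun l => (D.2.2.1 l, cfun (D.2.2.1 l))))
          (fun l => mselR n₁ n₂ m K hK q Vsc D.1 D.2.1
            (fun l' => (D.2.2.1 l', cfun (D.2.2.1 l'))) l)
          (fun _ => (1:ℝ))) : ℝ) := by
      have := h2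
      rw [one_mul] at this
      exact this
    rw [if_pos hj, if_pos h1']
    have hden : max 1 (mselR n₁ n₂ m K hK q Vsc D.1 D.2.1
        (fun l => (D.2.2.1 l, cfun (D.2.2.1 l))) j)
        ≤ ((max 1 (Set.ncard (prunedSet m q
          (pvals (mselV n₁ n₂ m K hK q Vsc) D.1 D.2.1
            (fun l => (D.2.2.1 l, cfun (D.2.2.1 l))))
          (fun l => mselR n₁ n₂ m K hK q Vsc D.1 D.2.1
            (fun l' => (D.2.2.1 l', cfun (D.2.2.1 l'))) l)
          (fun _ => (1:ℝ)))) : ℕ) : ℝ) := by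
      rw [Nat.cast_max, Nat.cast_one]
      exact max_le_max le_rfl h2'
    exact one_div_le_one_div_of_le (lt_of_lt_of_le one_pos (le_max_left _ _)) hden
  · rw [if_neg hj, zero_div]
    exact div_nonneg (by split <;> norm_num)
      (le_trans zero_le_one (le_max_left _ _))

end GH

section Split

variable {𝓧' : Type*} [MeasurableSpace 𝓧']

open Classical in
lemma fdp_split {m : ℕ} (q : ℝ) (p R lam : Fin m → ℝ) (Nl : Set (Fin m)) :
    (Set.ncard (prunedSet m q p R lam ∩ Nl) : ℝ)
      / ((max 1 (Set.ncard (prunedSet m q p R lam)) : ℕ) : ℝ)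
    = ∑ j : Fin m, (if j ∈ Nl then (1:ℝ) else 0) *
        ((if j ∈ prunedSet m q p R lam then (1:ℝ) else 0)
          / ((max 1 (Set.ncard (prunedSet m q p R lam)) : ℕ) : ℝ)) := by
  classical
  have h1 : ∀ j : Fin m, (if j ∈ Nl then (1:ℝ) else 0) *
      ((if j ∈ prunedSet m q p R lam then (1:ℝ) else 0)
        / ((max 1 (Set.ncard (prunedSet m q p R lam)) : ℕ) : ℝ))
      = (if j ∈ prunedSet m q p R lam ∩ Nl then (1:ℝ) else 0)
        / ((max 1 (Set.ncard (prunedSet m q p R lam)) : ℕ) : ℝ) := by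
    intro j
    by_cases ha : j ∈ Nl <;> by_cases hb : j ∈ prunedSet m q p R lam <;>
      simp [ha, hb, Set.mem_inter_iff]
  rw [Finset.sum_congr rfl (fun j _ => h1 j), ← Finset.sum_div]
  congr 1
  conv_lhs => rw [← Set.setOf_mem_eq (s := prunedSet m q p R lam ∩ Nl)]
  rw [ncard_setOf_eq_sum (fun j => j ∈ prunedSet m q p R lam ∩ Nl), Nat.cast_sum]
  exact Finset.sum_congr rfl (fun j _ => by split <;> simp)

open Classical in
lemma hsplit_pure (n₁ n₂ m K : ℕ) (hK : 0 < K) (q : ℝ) (Vsc : Fin K → 𝓧' × ℝ → ℝ)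
    (cfun : 𝓧' → ℝ)
    (D : (Fin n₁ → 𝓧' × ℝ) × (Fin n₂ → 𝓧' × ℝ) × (Fin m → 𝓧') × (Fin m → ℝ))
    (x : Fin m → ℝ) :
    (Set.ncard (prunedSet m q
        (pvals (mselV n₁ n₂ m K hK q Vsc) D.1 D.2.1
          (fun l => (D.2.2.1 l, cfun (D.2.2.1 l))))
        (fun l => mselR n₁ n₂ m K hK q Vsc D.1 D.2.1
          (fun l' => (D.2.2.1 l', cfun (D.2.2.1 l'))) l) x
        ∩ {j : Fin m | D.2.2.2 j ≤ cfun (D.2.2.1 j)}) : ℝ)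
      / ((max 1 (Set.ncard (prunedSet m q
        (pvals (mselV n₁ n₂ m K hK q Vsc) D.1 D.2.1
          (fun l => (D.2.2.1 l, cfun (D.2.2.1 l))))
        (fun l => mselR n₁ n₂ m K hK q Vsc D.1 D.2.1
          (fun l' => (D.2.2.1 l', cfun (D.2.2.1 l'))) l) x)) : ℕ) : ℝ)
    = ∑ j : Fin m, gjFn n₁ n₂ m K hK q Vsc cfun j (D, x) := by
  classical
  rw [fdp_split]
  refine Finset.sum_congr rfl fun j _ => ?_
  rw [gjFn_eval]
  by_cases h : D.2.2.2 j ≤ cfun (D.2.2.1 j) <;>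
    simp [h, Set.mem_setOf_eq]

open Classical in
lemma gj_fam_le (n₁ n₂ m K : ℕ) (hK : 0 < K) (q : ℝ) (Vsc : Fin K → 𝓧' × ℝ → ℝ)
    (cfun : 𝓧' → ℝ) (j : Fin m)
    (D : (Fin n₁ → 𝓧' × ℝ) × (Fin n₂ → 𝓧' × ℝ) × (Fin m → 𝓧') × (Fin m → ℝ))
    (lam : ℝ → Fin m → ℝ) (hjj : ∀ s, lam s j = s)
    (hmono : ∀ a b : ℝ, a ≤ b → ∀ l : Fin m, lam a l ≤ lam b l) :
    ∫ s in Set.Icc (0:ℝ) 1, gjFn n₁ n₂ m K hK q Vsc cfun j (D, lam s)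
      ≤ HjFn n₁ n₂ m K hK q Vsc cfun j D := by
  classical
  rw [HjFn_eval]
  set P : Fin m → ℝ := pvals (mselV n₁ n₂ m K hK q Vsc) D.1 D.2.1
      (fun l => (D.2.2.1 l, cfun (D.2.2.1 l))) with hP
  set Rf : Fin m → ℝ := fun l => mselR n₁ n₂ m K hK q Vsc D.1 D.2.1
      (fun l' => (D.2.2.1 l', cfun (D.2.2.1 l'))) l with hRf
  have hnn : ∀ l : Fin m, (0:ℝ) ≤ Rf l := by
    intro l
    rw [hRf]
    unfold mselR
    exact Nat.cast_nonneg _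
  set c : ℝ := if D.2.2.2 j ≤ cfun (D.2.2.1 j) then (1:ℝ) else 0 with hc
  have hc0 : 0 ≤ c := by rw [hc]; split <;> norm_num
  have h1 : ∀ s : ℝ, gjFn n₁ n₂ m K hK q Vsc cfun j (D, lam s)
      = c * ((if j ∈ prunedSet m q P Rf (lam s) then (1:ℝ) else 0)
          / max 1 ((Set.ncard (prunedSet m q P Rf (lam s)) : ℝ))) := by
    intro s
    rw [gjFn_eval, Nat.cast_max, Nat.cast_one]
  have hF : ∀ ⦃a b : ℝ⦄, a ≤ b →
      prunedSet m q P Rf (lam b) ⊆ prunedSet m q P Rf (lam a) := by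
    intro a b hab
    exact prunedSet_anti m q P Rf hnn (fun l => hmono a b hab l)
  have hmem : ∀ x, j ∈ prunedSet m q P Rf (lam x) →
      (x * Rf j ≤ (Set.ncard (prunedSet m q P Rf (lam x)) : ℝ) ∧ (P j ≤ q * Rf j / m)) := by
    intro x hx
    obtain ⟨ha, hb⟩ := mem_prunedSet_imp hx
    refine ⟨?_, ha⟩
    rw [hjj x] at hb
    exact hb
  have key := prune_integral j (Rf j) (hnn j) (fun s => prunedSet m q P Rf (lam s))
    (P j ≤ q * Rf j / m) hF hmem
  calc ∫ s in Set.Icc (0:ℝ) 1, gjFn n₁ n₂ m K hK q Vsc cfun j (D, lam s)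
      = ∫ s in Set.Icc (0:ℝ) 1, c * ((if j ∈ prunedSet m q P Rf (lam s) then (1:ℝ) else 0)
          / max 1 ((Set.ncard (prunedSet m q P Rf (lam s)) : ℝ))) :=
        integral_congr_ae (Filter.Eventually.of_forall h1)
    _ = c * ∫ s in Set.Icc (0:ℝ) 1, (if j ∈ prunedSet m q P Rf (lam s) then (1:ℝ) else 0)
          / max 1 ((Set.ncard (prunedSet m q P Rf (lam s)) : ℝ)) := integral_const_mul c _
    _ ≤ c * ((if P j ≤ q * Rf j / m then (1:ℝ) else 0) / max 1 (Rf j)) :=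
        mul_le_mul_of_nonneg_left key hc0
    _ = c * ((if P j ≤ q * Rf j / m then (1:ℝ) else 0) / max 1 (Rf j)) := rfl

end Split

section PiBound

variable {𝓧' : Type*} [MeasurableSpace 𝓧']

lemma Phi_nonneg (n₁ n₂ m K : ℕ) (hK : 0 < K) (q : ℝ) (Vsc : Fin K → 𝓧' × ℝ → ℝ)
    (cfun : 𝓧' → ℝ) (j : Fin m) (v : ((Fin n₁ ⊕ Fin n₂) ⊕ Unit) → 𝓧' × ℝ)
    (t : {l : Fin m // l ≠ j} → 𝓧' × ℝ) :
    0 ≤ Phi n₁ n₂ m K hK q Vsc cfun j v t := by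
  unfold Phi
  exact PhiAux_nonneg _ _ _ _ _ _ _ _ _ _ _ _ _

lemma Phi_le_one (n₁ n₂ m K : ℕ) (hK : 0 < K) (q : ℝ) (Vsc : Fin K → 𝓧' × ℝ → ℝ)
    (cfun : 𝓧' → ℝ) (j : Fin m) (v : ((Fin n₁ ⊕ Fin n₂) ⊕ Unit) → 𝓧' × ℝ)
    (t : {l : Fin m // l ≠ j} → 𝓧' × ℝ) :
    Phi n₁ n₂ m K hK q Vsc cfun j v t ≤ 1 := by
  unfold Phi
  exact PhiAux_le_one _ _ _ _ _ _ _ _ _ _ _ _ _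

lemma pi_fintype_irrel {ι : Type*} {α : ι → Type*} (F1 F2 : Fintype ι)
    [∀ i, MeasurableSpace (α i)] (μ : ∀ i, Measure (α i)) :
    @Measure.pi ι α F1 _ μ = @Measure.pi ι α F2 _ μ := by
  rw [Subsingleton.elim F1 F2]

lemma pi_prune_bound (n₁ n₂ m K : ℕ) (hK : 0 < K)
    (q : ℝ) (Vsc : Fin K → 𝓧' × ℝ → ℝ) (hVsc : ∀ k, Measurable (Vsc k))
    (cfun : 𝓧' → ℝ) (hcfun : Measurable cfun) (j : Fin m)
    (D : (Fin n₁ → 𝓧' × ℝ) × (Fin n₂ → 𝓧' × ℝ) × (Fin m → 𝓧') × (Fin m → ℝ)) :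
    ∫ x, gjFn n₁ n₂ m K hK q Vsc cfun j (D, x)
        ∂(Measure.pi (fun _ : Fin m => (volume : Measure ℝ).restrict (Set.Icc 0 1)))
      ≤ HjFn n₁ n₂ m K hK q Vsc cfun j D := by
  classical
  haveI hprob : IsProbabilityMeasure ((volume : Measure ℝ).restrict (Set.Icc 0 1)) :=
    ⟨by rw [Measure.restrict_apply_univ]; simp⟩
  haveI : Unique {l : Fin m // l = j} := ⟨⟨⟨j, rfl⟩⟩, fun a => Subtype.ext a.2⟩
  set ν := (volume : Measure ℝ).restrict (Set.Icc 0 1) with hν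
  set f : (Fin m → ℝ) → ℝ := fun x => gjFn n₁ n₂ m K hK q Vsc cfun j (D, x) with hf
  have hfmeas : Measurable f :=
    (measurable_gjFn n₁ n₂ m K hK q Vsc cfun hVsc hcfun j).comp measurable_prodMk_left
  have hfnn : ∀ x, 0 ≤ f x := by
    intro x
    rw [hf]
    unfold gjFn
    exact gAux_nonneg n₂ m K hK q j _ _
  have hfle : ∀ x, f x ≤ 1 := by
    intro x
    rw [hf]
    unfold gjFn
    exact gAux_le_one n₂ m K hK q j _ _
  set e := MeasurableEquiv.piEquivPiSubtypeProd (fun _ : Fin m => ℝ) (fun l => l = j) with he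
  have hMP : MeasurePreserving (⇑e) (Measure.pi fun _ : Fin m => ν)
      ((Measure.pi fun _ : {l : Fin m // l = j} => ν).prod
        (Measure.pi fun _ : {l : Fin m // ¬ l = j} => ν)) := by
    have h := measurePreserving_piEquivPiSubtypeProd (fun _ : Fin m => ν) (fun l => l = j)
    convert h using 3 <;>
      first
        | rfl
        | exact pi_fintype_irrel _ _ _
        | exact Subsingleton.elim _ _
  haveI : IsProbabilityMeasure (Measure.pi fun _ : {l : Fin m // l = j} => ν) :=
    ⟨by rw [Measure.pi_univ]; simp⟩
  haveI : IsProbabilityMeasure (Measure.pi fun _ : {l : Fin m // ¬ l = j} => ν) :=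
    ⟨by rw [Measure.pi_univ]; simp⟩
  have hg : AEStronglyMeasurable
      (fun ab : ({l : Fin m // l = j} → ℝ) × ({l : Fin m // ¬ l = j} → ℝ) => f (e.symm ab))
      (Measure.map (⇑e) (Measure.pi fun _ : Fin m => ν)) :=
    (hfmeas.comp e.symm.measurable).aestronglyMeasurable
  have h1 : ∫ ab, f (e.symm ab)
      ∂((Measure.pi fun _ : {l : Fin m // l = j} => ν).prod
        (Measure.pi fun _ : {l : Fin m // ¬ l = j} => ν))
      = ∫ x, f x ∂(Measure.pi fun _ : Fin m => ν) := by
    rw [← hMP.map_eq, integral_map e.measurable.aemeasurable hg]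
    simp only [MeasurableEquiv.symm_apply_apply]
  have hIntProd : Integrable (fun ab => f (e.symm ab))
      ((Measure.pi fun _ : {l : Fin m // l = j} => ν).prod
        (Measure.pi fun _ : {l : Fin m // ¬ l = j} => ν)) := by
    refine (integrable_const (1:ℝ)).mono'
      (hfmeas.comp e.symm.measurable).aestronglyMeasurable
      (Filter.Eventually.of_forall fun ab => ?_)
    rw [Real.norm_eq_abs, abs_of_nonneg (hfnn _)]
    exact hfle _
  have hsymm_apply : ∀ (a : {l : Fin m // l = j} → ℝ) (b : {l : Fin m // ¬ l = j} → ℝ)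
      (l : Fin m), e.symm (a, b) l = if h : l = j then a ⟨l, h⟩ else b ⟨l, h⟩ := by
    intro a b l
    rw [he]
    rfl
  have h3 : ∀ b : {l : Fin m // ¬ l = j} → ℝ,
      ∫ a : {l : Fin m // l = j} → ℝ, f (e.symm (a, b)) ∂(Measure.pi fun _ => ν)
      = ∫ s : ℝ, f (e.symm (fun _ => s, b)) ∂ν := by
    intro b
    have hMP2 : MeasurePreserving (⇑(MeasurableEquiv.funUnique {l : Fin m // l = j} ℝ))
        (Measure.pi fun _ : {l : Fin m // l = j} => ν) ν := by
      have h := measurePreserving_funUnique ν {l : Fin m // l = j}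
      convert h using 3 <;>
        first
          | rfl
          | exact pi_fintype_irrel _ _ _
          | exact Subsingleton.elim _ _
    have hms : Measurable (fun s : ℝ => f (e.symm (fun _ => s, b))) :=
      hfmeas.comp (e.symm.measurable.comp
        ((measurable_pi_lambda _ fun _ => measurable_id).prodMk measurable_const))
    calc ∫ a : {l : Fin m // l = j} → ℝ, f (e.symm (a, b)) ∂(Measure.pi fun _ => ν)
        = ∫ a : {l : Fin m // l = j} → ℝ,
            (fun s : ℝ => f (e.symm (fun _ => s, b)))
              ((MeasurableEquiv.funUnique {l : Fin m // l = j} ℝ) a)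
            ∂(Measure.pi fun _ => ν) := by
          refine integral_congr_ae (Filter.Eventually.of_forall fun a => ?_)
          have ha : (fun _ : {l : Fin m // l = j} =>
              (MeasurableEquiv.funUnique {l : Fin m // l = j} ℝ) a) = a := by
            funext x
            have hx : x = default := Subsingleton.elim _ _
            rw [hx]
            rfl
          show f (e.symm (a, b)) = f (e.symm (fun _ =>
            (MeasurableEquiv.funUnique {l : Fin m // l = j} ℝ) a, b))
          rw [ha]
      _ = ∫ s : ℝ, f (e.symm (fun _ => s, b)) ∂ν := by
          conv_rhs => rw [← hMP2.map_eq]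
          have hg2 : AEStronglyMeasurable (fun s : ℝ => f (e.symm (fun _ => s, b)))
              (Measure.map (⇑(MeasurableEquiv.funUnique {l : Fin m // l = j} ℝ))
                (Measure.pi fun _ : {l : Fin m // l = j} => ν)) :=
            hms.aestronglyMeasurable
          exact (integral_map
            (MeasurableEquiv.funUnique {l : Fin m // l = j} ℝ).measurable.aemeasurable
            hg2).symm
  calc ∫ x, f x ∂(Measure.pi fun _ : Fin m => ν)
      = ∫ ab, f (e.symm ab)
          ∂((Measure.pi fun _ : {l : Fin m // l = j} => ν).prod
            (Measure.pi fun _ : {l : Fin m // ¬ l = j} => ν)) := h1.symm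
    _ = ∫ b, ∫ a, f (e.symm (a, b)) ∂(Measure.pi fun _ : {l : Fin m // l = j} => ν)
          ∂(Measure.pi fun _ : {l : Fin m // ¬ l = j} => ν) :=
        integral_prod_symm _ hIntProd
    _ = ∫ b, ∫ s : ℝ, f (e.symm (fun _ => s, b)) ∂ν
          ∂(Measure.pi fun _ : {l : Fin m // ¬ l = j} => ν) :=
        integral_congr_ae (Filter.Eventually.of_forall fun b => h3 b)
    _ ≤ ∫ _b, HjFn n₁ n₂ m K hK q Vsc cfun j D
          ∂(Measure.pi fun _ : {l : Fin m // ¬ l = j} => ν) := by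
        refine integral_mono_of_nonneg
          (Filter.Eventually.of_forall fun b => integral_nonneg fun s => hfnn _)
          (integrable_const _)
          (Filter.Eventually.of_forall fun b => ?_)
        have hjj : ∀ s : ℝ, e.symm (fun _ => s, b) j = s := by
          intro s
          rw [hsymm_apply]
          simp
        have hmono : ∀ a c : ℝ, a ≤ c → ∀ l : Fin m,
            e.symm (fun _ => a, b) l ≤ e.symm (fun _ => c, b) l := by
          intro a c hac l
          rw [hsymm_apply, hsymm_apply]
          by_cases hl : l = j
          · rw [dif_pos hl, dif_pos hl]; exact hac
          · rw [dif_neg hl, dif_neg hl]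
        exact gj_fam_le n₁ n₂ m K hK q Vsc cfun j D
          (fun s => e.symm (fun _ => s, b)) hjj hmono
    _ = HjFn n₁ n₂ m K hK q Vsc cfun j D := by
        rw [integral_const]
        simp

end PiBound
/-- **validity of OptCS-MSel.**  With K pre-trained monotone clipped score
functions, the OptCS-MSel score-generating functional is monotone for each null and
permutation equivariant, and its auxiliary selection function is permutation invariant under
each null.  Consequently, if for every j the labeled data together with the j-th test point
are exchangeable given the other test points, the output of OptCS-MSel (under any of the three
pruning options) has FDR ≤ q. -/
theorem optcs_msel_valid
    {Ω : Type*} [MeasurableSpace Ω] (μ : Measure Ω) [IsProbabilityMeasure μ]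
    [MeasurableSpace 𝓧]
    (n₁ n₂ m K : ℕ) (hK : 0 < K) (q : ℝ) (hq : q ∈ Set.Ioo (0 : ℝ) 1)
    (cfun : 𝓧 → ℝ) (hcfun : Measurable cfun)
    (Vsc : Fin K → 𝓧 × ℝ → ℝ)
    (hVscMeas : ∀ k, Measurable (Vsc k))
    -- each candidate score is monotone in y
    (hVscMono : ∀ (k : Fin K) (x : 𝓧), Monotone fun y : ℝ => Vsc k (x, y))
    -- each candidate score is of clipped type
    (hVscClip : ∀ (k : Fin K) (x : 𝓧) (y : ℝ), y ≤ cfun x → Vsc k (x, y) = Vsc k (x, cfun x))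
    -- the data and pruning variables
    (Zprep : Fin n₁ → Ω → 𝓧 × ℝ) (Zcal : Fin n₂ → Ω → 𝓧 × ℝ)
    (Xt : Fin m → Ω → 𝓧) (Yt : Fin m → Ω → ℝ) (ξ : Fin m → Ω → ℝ)
    (hZprep : ∀ i, Measurable (Zprep i)) (hZcal : ∀ i, Measurable (Zcal i))
    (hXt : ∀ j, Measurable (Xt j)) (hYt : ∀ j, Measurable (Yt j))
    (hξmeas : ∀ j, Measurable (ξ j))
    (hprune :
      (∀ j ω, ξ j ω = 1) ∨
      ((∃ ξ₀ : Ω → ℝ, (∀ j, ξ j = ξ₀) ∧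
          Measure.map ξ₀ μ = volume.restrict (Set.Icc (0 : ℝ) 1)) ∧
        IndepFun (fun ω (j : Fin m) => ξ j ω)
          (fun ω => (fun i => Zprep i ω, fun i => Zcal i ω,
            fun j => Xt j ω, fun j => Yt j ω)) μ) ∨
      ((Measure.map (fun ω (j : Fin m) => ξ j ω) μ
          = Measure.pi (fun _ : Fin m => volume.restrict (Set.Icc (0 : ℝ) 1))) ∧
        IndepFun (fun ω (j : Fin m) => ξ j ω)
          (fun ω => (fun i => Zprep i ω, fun i => Zcal i ω,
            fun j => Xt j ω, fun j => Yt j ω)) μ)) :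
    -- the OptCS-MSel functionals satisfy the three defining properties
    (∀ j : Fin m, MonotoneNull cfun (mselV n₁ n₂ m K hK q Vsc) j) ∧
    PermEquivariant (mselV n₁ n₂ m K hK q Vsc) ∧
    (∀ j : Fin m, PermInvariantNull cfun (mselR n₁ n₂ m K hK q Vsc) j) ∧
    -- consequently, under exchangeability, FDR ≤ q
    ((∀ j : Fin m, ∀ π : Equiv.Perm ((Fin n₁ ⊕ Fin n₂) ⊕ Unit),
        Measure.map (fun ω =>
            ((fun i : (Fin n₁ ⊕ Fin n₂) ⊕ Unit =>
                Sum.elim (Sum.elim (fun i' => Zprep i' ω) (fun i' => Zcal i' ω))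
                  (fun _ => (Xt j ω, Yt j ω)) (π i)),
              fun l : {l : Fin m // l ≠ j} => (Xt l.1 ω, cfun (Xt l.1 ω)))) μ
          = Measure.map (fun ω =>
            ((fun i : (Fin n₁ ⊕ Fin n₂) ⊕ Unit =>
                Sum.elim (Sum.elim (fun i' => Zprep i' ω) (fun i' => Zcal i' ω))
                  (fun _ => (Xt j ω, Yt j ω)) i),
              fun l : {l : Fin m // l ≠ j} => (Xt l.1 ω, cfun (Xt l.1 ω)))) μ) →
      ∫ ω,
          (Set.ncard
              (prunedSet m q
                  (pvals (mselV n₁ n₂ m K hK q Vsc) (fun i => Zprep i ω)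
                    (fun i => Zcal i ω) (fun l => (Xt l ω, cfun (Xt l ω))))
                  (fun j => mselR n₁ n₂ m K hK q Vsc (fun i => Zprep i ω)
                    (fun i => Zcal i ω) (fun l => (Xt l ω, cfun (Xt l ω))) j)
                  (fun j => ξ j ω) ∩
                {j : Fin m | Yt j ω ≤ cfun (Xt j ω)}) : ℝ) /
            ((max 1 (Set.ncard
              (prunedSet m q
                  (pvals (mselV n₁ n₂ m K hK q Vsc) (fun i => Zprep i ω)
                    (fun i => Zcal i ω) (fun l => (Xt l ω, cfun (Xt l ω))))
                  (fun j => mselR n₁ n₂ m K hK q Vsc (fun i => Zprep i ω)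
                    (fun i => Zcal i ω) (fun l => (Xt l ω, cfun (Xt l ω))) j)
                  (fun j => ξ j ω))) : ℕ) : ℝ) ∂μ
        ≤ q) := by
  classical
  obtain ⟨hq0, hq1⟩ := hq
  refine ⟨fun j => msel_monotoneNull hK q Vsc cfun hVscClip j,
    msel_permEquivariant hK q Vsc,
    fun j => msel_permInvariantNull hK q Vsc cfun hVscClip j, ?_⟩
  intro hexch
  have hDmeas : Measurable (fun ω =>
      ((fun i => Zprep i ω, fun i => Zcal i ω, fun l => Xt l ω, fun l => Yt l ω) :
        (Fin n₁ → 𝓧 × ℝ) × (Fin n₂ → 𝓧 × ℝ) × (Fin m → 𝓧) × (Fin m → ℝ))) :=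
    Measurable.prodMk (measurable_pi_lambda _ fun i => hZprep i)
      (Measurable.prodMk (measurable_pi_lambda _ fun i => hZcal i)
        (Measurable.prodMk (measurable_pi_lambda _ fun l => hXt l)
          (measurable_pi_lambda _ fun l => hYt l)))
  have hxivm : Measurable (fun ω (l : Fin m) => ξ l ω) :=
    measurable_pi_lambda _ fun l => hξmeas l
  have hGmeas : ∀ j : Fin m, Measurable (fun ω => gjFn n₁ n₂ m K hK q Vsc cfun j
      ((fun i => Zprep i ω, fun i => Zcal i ω, fun l => Xt l ω, fun l => Yt l ω),
        fun l => ξ l ω)) := fun j =>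
    (measurable_gjFn n₁ n₂ m K hK q Vsc cfun hVscMeas hcfun j).comp
      (hDmeas.prodMk hxivm)
  have hGnn : ∀ (j : Fin m) Dx, 0 ≤ gjFn n₁ n₂ m K hK q Vsc cfun j Dx := by
    intro j Dx
    unfold gjFn
    exact gAux_nonneg n₂ m K hK q j _ _
  have hGle1 : ∀ (j : Fin m) Dx, gjFn n₁ n₂ m K hK q Vsc cfun j Dx ≤ 1 := by
    intro j Dx
    unfold gjFn
    exact gAux_le_one n₂ m K hK q j _ _
  have hGint : ∀ j : Fin m, Integrable (fun ω => gjFn n₁ n₂ m K hK q Vsc cfun j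
      ((fun i => Zprep i ω, fun i => Zcal i ω, fun l => Xt l ω, fun l => Yt l ω),
        fun l => ξ l ω)) μ := fun j =>
    (integrable_const (1:ℝ)).mono' (hGmeas j).aestronglyMeasurable
      (Filter.Eventually.of_forall fun ω => by
        rw [Real.norm_eq_abs, abs_of_nonneg (hGnn j _)]
        exact hGle1 j _)
  have hHmeas : ∀ j : Fin m, Measurable (fun ω => HjFn n₁ n₂ m K hK q Vsc cfun j
      (fun i => Zprep i ω, fun i => Zcal i ω, fun l => Xt l ω, fun l => Yt l ω)) := fun j =>
    (measurable_HjFn n₁ n₂ m K hK q Vsc cfun hVscMeas hcfun j).comp hDmeas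
  have hHint : ∀ j : Fin m, Integrable (fun ω => HjFn n₁ n₂ m K hK q Vsc cfun j
      (fun i => Zprep i ω, fun i => Zcal i ω, fun l => Xt l ω, fun l => Yt l ω)) μ := fun j =>
    (integrable_const (1:ℝ)).mono' (hHmeas j).aestronglyMeasurable
      (Filter.Eventually.of_forall fun ω => by
        rw [Real.norm_eq_abs, abs_of_nonneg (HjFn_nonneg n₁ n₂ m K hK q Vsc cfun j _)]
        exact HjFn_le_one n₁ n₂ m K hK q Vsc cfun j _)
  -- Step 2: symmetrization bound on the H-integral
  have key2 : ∀ j : Fin m, (∫ ω, HjFn n₁ n₂ m K hK q Vsc cfun j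
      (fun i => Zprep i ω, fun i => Zcal i ω, fun l => Xt l ω, fun l => Yt l ω) ∂μ)
      ≤ q / m := by
    intro j
    have hm : 0 < m := j.pos
    have hPhiM := measurable_Phi n₁ n₂ m K hK q Vsc hVscMeas cfun hcfun j
    have hpairM : ∀ π : Equiv.Perm ((Fin n₁ ⊕ Fin n₂) ⊕ Unit),
        Measurable (fun ω =>
          ((fun i : (Fin n₁ ⊕ Fin n₂) ⊕ Unit =>
              Sum.elim (Sum.elim (fun i' => Zprep i' ω) (fun i' => Zcal i' ω))
                (fun _ => (Xt j ω, Yt j ω)) (π i)),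
            fun l : {l : Fin m // l ≠ j} => (Xt l.1 ω, cfun (Xt l.1 ω)))) := by
      intro π
      refine Measurable.prodMk (measurable_pi_lambda _ fun i => ?_)
        (measurable_pi_lambda _ fun l =>
          Measurable.prodMk (hXt l.1) (hcfun.comp (hXt l.1)))
      rcases π i with (a | b) | u
      · exact hZprep a
      · exact hZcal b
      · exact Measurable.prodMk (hXt j) (hYt j)
    have hPhiInt : ∀ π : Equiv.Perm ((Fin n₁ ⊕ Fin n₂) ⊕ Unit),
        Integrable (fun ω => Phi n₁ n₂ m K hK q Vsc cfun j
          (fun i => Sum.elim (Sum.elim (fun i' => Zprep i' ω) (fun i' => Zcal i' ω))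
            (fun _ => (Xt j ω, Yt j ω)) (π i))
          (fun l : {l : Fin m // l ≠ j} => (Xt l.1 ω, cfun (Xt l.1 ω)))) μ := by
      intro π
      refine (integrable_const (1:ℝ)).mono' ?_ (Filter.Eventually.of_forall fun ω => ?_)
      · exact (hPhiM.comp (hpairM π)).aestronglyMeasurable
      · rw [Real.norm_eq_abs, abs_of_nonneg (Phi_nonneg _ _ _ _ _ _ _ _ _ _ _)]
        exact Phi_le_one _ _ _ _ _ _ _ _ _ _ _
    have hPg : ∀ (mm : Measure ((((Fin n₁ ⊕ Fin n₂) ⊕ Unit) → 𝓧 × ℝ)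
        × ({l : Fin m // l ≠ j} → 𝓧 × ℝ))), AEStronglyMeasurable
        (fun vt : (((Fin n₁ ⊕ Fin n₂) ⊕ Unit) → 𝓧 × ℝ)
            × ({l : Fin m // l ≠ j} → 𝓧 × ℝ) =>
          Phi n₁ n₂ m K hK q Vsc cfun j vt.1 vt.2) mm := fun mm =>
      hPhiM.aestronglyMeasurable
    have hswap : ∀ o : Option (Fin n₂),
        (∫ ω, Phi n₁ n₂ m K hK q Vsc cfun j
          (fun i => Sum.elim (Sum.elim (fun i' => Zprep i' ω) (fun i' => Zcal i' ω))
            (fun _ => (Xt j ω, Yt j ω)) ((swapPerm n₁ n₂ o) i))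
          (fun l : {l : Fin m // l ≠ j} => (Xt l.1 ω, cfun (Xt l.1 ω))) ∂μ)
        = ∫ ω, Phi n₁ n₂ m K hK q Vsc cfun j
          (fun i => Sum.elim (Sum.elim (fun i' => Zprep i' ω) (fun i' => Zcal i' ω))
            (fun _ => (Xt j ω, Yt j ω)) i)
          (fun l : {l : Fin m // l ≠ j} => (Xt l.1 ω, cfun (Xt l.1 ω))) ∂μ := by
      intro o
      have h1 := hexch j (swapPerm n₁ n₂ o)
      calc (∫ ω, Phi n₁ n₂ m K hK q Vsc cfun j
            (fun i => Sum.elim (Sum.elim (fun i' => Zprep i' ω) (fun i' => Zcal i' ω))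
              (fun _ => (Xt j ω, Yt j ω)) ((swapPerm n₁ n₂ o) i))
            (fun l : {l : Fin m // l ≠ j} => (Xt l.1 ω, cfun (Xt l.1 ω))) ∂μ)
          = ∫ vt, Phi n₁ n₂ m K hK q Vsc cfun j vt.1 vt.2
              ∂(Measure.map (fun ω =>
                ((fun i : (Fin n₁ ⊕ Fin n₂) ⊕ Unit =>
                    Sum.elim (Sum.elim (fun i' => Zprep i' ω) (fun i' => Zcal i' ω))
                      (fun _ => (Xt j ω, Yt j ω)) ((swapPerm n₁ n₂ o) i)),
                  fun l : {l : Fin m // l ≠ j} => (Xt l.1 ω, cfun (Xt l.1 ω)))) μ) :=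
            (integral_map (hpairM (swapPerm n₁ n₂ o)).aemeasurable (hPg _)).symm
        _ = ∫ vt, Phi n₁ n₂ m K hK q Vsc cfun j vt.1 vt.2
              ∂(Measure.map (fun ω =>
                ((fun i : (Fin n₁ ⊕ Fin n₂) ⊕ Unit =>
                    Sum.elim (Sum.elim (fun i' => Zprep i' ω) (fun i' => Zcal i' ω))
                      (fun _ => (Xt j ω, Yt j ω)) i),
                  fun l : {l : Fin m // l ≠ j} => (Xt l.1 ω, cfun (Xt l.1 ω)))) μ) := by
            rw [h1]
        _ = ∫ ω, Phi n₁ n₂ m K hK q Vsc cfun j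
            (fun i => Sum.elim (Sum.elim (fun i' => Zprep i' ω) (fun i' => Zcal i' ω))
              (fun _ => (Xt j ω, Yt j ω)) i)
            (fun l : {l : Fin m // l ≠ j} => (Xt l.1 ω, cfun (Xt l.1 ω))) ∂μ :=
            integral_map (hpairM (Equiv.refl _)).aemeasurable (hPg _)
    have hid : (∫ ω, HjFn n₁ n₂ m K hK q Vsc cfun j
        (fun i => Zprep i ω, fun i => Zcal i ω, fun l => Xt l ω, fun l => Yt l ω) ∂μ)
        = ∫ ω, Phi n₁ n₂ m K hK q Vsc cfun j
          (fun i => Sum.elim (Sum.elim (fun i' => Zprep i' ω) (fun i' => Zcal i' ω))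
            (fun _ => (Xt j ω, Yt j ω)) i)
          (fun l : {l : Fin m // l ≠ j} => (Xt l.1 ω, cfun (Xt l.1 ω))) ∂μ := rfl
    rw [hid]
    have hpos : (0:ℝ) < (n₂ : ℝ) + 1 := by positivity
    have hsum : ((n₂ : ℝ) + 1) * (∫ ω, Phi n₁ n₂ m K hK q Vsc cfun j
        (fun i => Sum.elim (Sum.elim (fun i' => Zprep i' ω) (fun i' => Zcal i' ω))
          (fun _ => (Xt j ω, Yt j ω)) i)
        (fun l : {l : Fin m // l ≠ j} => (Xt l.1 ω, cfun (Xt l.1 ω))) ∂μ)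
        = ∫ ω, ∑ o : Option (Fin n₂), Phi n₁ n₂ m K hK q Vsc cfun j
          (fun i => Sum.elim (Sum.elim (fun i' => Zprep i' ω) (fun i' => Zcal i' ω))
            (fun _ => (Xt j ω, Yt j ω)) ((swapPerm n₁ n₂ o) i))
          (fun l : {l : Fin m // l ≠ j} => (Xt l.1 ω, cfun (Xt l.1 ω))) ∂μ := by
      rw [integral_finset_sum Finset.univ (fun o _ => hPhiInt (swapPerm n₁ n₂ o))]
      rw [Finset.sum_congr rfl (fun o _ => hswap o), Finset.sum_const, Finset.card_univ,
        Fintype.card_option, Fintype.card_fin, nsmul_eq_mul]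
      push_cast
      ring
    have hcore : (∫ ω, ∑ o : Option (Fin n₂), Phi n₁ n₂ m K hK q Vsc cfun j
        (fun i => Sum.elim (Sum.elim (fun i' => Zprep i' ω) (fun i' => Zcal i' ω))
          (fun _ => (Xt j ω, Yt j ω)) ((swapPerm n₁ n₂ o) i))
        (fun l : {l : Fin m // l ≠ j} => (Xt l.1 ω, cfun (Xt l.1 ω))) ∂μ)
        ≤ q * ((n₂ : ℝ) + 1) / m := by
      calc (∫ ω, ∑ o : Option (Fin n₂), Phi n₁ n₂ m K hK q Vsc cfun j
          (fun i => Sum.elim (Sum.elim (fun i' => Zprep i' ω) (fun i' => Zcal i' ω))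
            (fun _ => (Xt j ω, Yt j ω)) ((swapPerm n₁ n₂ o) i))
          (fun l : {l : Fin m // l ≠ j} => (Xt l.1 ω, cfun (Xt l.1 ω))) ∂μ)
          ≤ ∫ _ω, (q * ((n₂ : ℝ) + 1) / m) ∂μ := by
            refine integral_mono_of_nonneg
              (Filter.Eventually.of_forall fun ω => Finset.sum_nonneg fun o _ =>
                Phi_nonneg _ _ _ _ _ _ _ _ _ _ _)
              (integrable_const _)
              (Filter.Eventually.of_forall fun ω => ?_)
            exact core_sum n₁ n₂ m K hK q hq0.le hm Vsc cfun hVscClip j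
              (fun i => Sum.elim (Sum.elim (fun i' => Zprep i' ω) (fun i' => Zcal i' ω))
                (fun _ => (Xt j ω, Yt j ω)) i)
              (fun l => (Xt l.1 ω, cfun (Xt l.1 ω)))
        _ = q * ((n₂ : ℝ) + 1) / m := by
            rw [integral_const]
            simp
    have hfinal : ((n₂ : ℝ) + 1) * (∫ ω, Phi n₁ n₂ m K hK q Vsc cfun j
        (fun i => Sum.elim (Sum.elim (fun i' => Zprep i' ω) (fun i' => Zcal i' ω))
          (fun _ => (Xt j ω, Yt j ω)) i)
        (fun l : {l : Fin m // l ≠ j} => (Xt l.1 ω, cfun (Xt l.1 ω))) ∂μ)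
        ≤ ((n₂ : ℝ) + 1) * (q / m) := by
      rw [hsum]
      refine le_trans hcore (le_of_eq ?_)
      ring
    exact le_of_mul_le_mul_left hfinal hpos
  -- Step 1: per-j bound for each pruning option
  have hper : ∀ j : Fin m, (∫ ω, gjFn n₁ n₂ m K hK q Vsc cfun j
      ((fun i => Zprep i ω, fun i => Zcal i ω, fun l => Xt l ω, fun l => Yt l ω),
        fun l => ξ l ω) ∂μ) ≤ q / m := by
    intro j
    refine le_trans ?_ (key2 j)
    have hHb : ∀ D, ‖HjFn n₁ n₂ m K hK q Vsc cfun j D‖ ≤ 1 := fun D => by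
      rw [Real.norm_eq_abs, abs_of_nonneg (HjFn_nonneg n₁ n₂ m K hK q Vsc cfun j D)]
      exact HjFn_le_one n₁ n₂ m K hK q Vsc cfun j D
    rcases hprune with hdet | ⟨⟨ξ₀, hξeq, hξlaw⟩, hind⟩ | ⟨hξlaw, hind⟩
    · refine integral_mono_of_nonneg (Filter.Eventually.of_forall fun ω => hGnn j _)
        (hHint j) (Filter.Eventually.of_forall fun ω => ?_)
      show gjFn n₁ n₂ m K hK q Vsc cfun j
          ((fun i => Zprep i ω, fun i => Zcal i ω, fun l => Xt l ω, fun l => Yt l ω),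
            fun l => ξ l ω)
        ≤ HjFn n₁ n₂ m K hK q Vsc cfun j
          (fun i => Zprep i ω, fun i => Zcal i ω, fun l => Xt l ω, fun l => Yt l ω)
      have hx1 : (fun l : Fin m => ξ l ω) = fun _ : Fin m => (1:ℝ) :=
        funext fun l => hdet l ω
      rw [hx1]
      exact gj_det_le n₁ n₂ m K hK q Vsc cfun j _
    · -- homogeneous pruning
      have hmap : Measure.map (fun ω =>
          (((fun i => Zprep i ω, fun i => Zcal i ω, fun l => Xt l ω, fun l => Yt l ω) :
            (Fin n₁ → 𝓧 × ℝ) × (Fin n₂ → 𝓧 × ℝ) × (Fin m → 𝓧) × (Fin m → ℝ)),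
            fun (l : Fin m) => ξ l ω)) μ
          = (Measure.map (fun ω =>
              ((fun i => Zprep i ω, fun i => Zcal i ω, fun l => Xt l ω, fun l => Yt l ω) :
                (Fin n₁ → 𝓧 × ℝ) × (Fin n₂ → 𝓧 × ℝ) × (Fin m → 𝓧) × (Fin m → ℝ))) μ).prod
            (Measure.map (fun ω (l : Fin m) => ξ l ω) μ) :=
        (indepFun_iff_map_prod_eq_prod_map_map hDmeas.aemeasurable hxivm.aemeasurable).mp
          hind.symm
      haveI hPD : IsProbabilityMeasure (Measure.map (fun ω =>
          ((fun i => Zprep i ω, fun i => Zcal i ω, fun l => Xt l ω, fun l => Yt l ω) :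
            (Fin n₁ → 𝓧 × ℝ) × (Fin n₂ → 𝓧 × ℝ) × (Fin m → 𝓧) × (Fin m → ℝ))) μ) :=
        Measure.isProbabilityMeasure_map hDmeas.aemeasurable
      haveI hPx : IsProbabilityMeasure (Measure.map (fun ω (l : Fin m) => ξ l ω) μ) :=
        Measure.isProbabilityMeasure_map hxivm.aemeasurable
      have hprodInt : Integrable (fun Dx => gjFn n₁ n₂ m K hK q Vsc cfun j Dx)
          ((Measure.map (fun ω =>
              ((fun i => Zprep i ω, fun i => Zcal i ω, fun l => Xt l ω, fun l => Yt l ω) :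
                (Fin n₁ → 𝓧 × ℝ) × (Fin n₂ → 𝓧 × ℝ) × (Fin m → 𝓧) × (Fin m → ℝ))) μ).prod
            (Measure.map (fun ω (l : Fin m) => ξ l ω) μ)) :=
        (integrable_const (1:ℝ)).mono'
          (measurable_gjFn n₁ n₂ m K hK q Vsc cfun hVscMeas hcfun j).aestronglyMeasurable
          (Filter.Eventually.of_forall fun Dx => by
            rw [Real.norm_eq_abs, abs_of_nonneg (hGnn j _)]
            exact hGle1 j _)
      have hinner : ∀ D : (Fin n₁ → 𝓧 × ℝ) × (Fin n₂ → 𝓧 × ℝ) × (Fin m → 𝓧) × (Fin m → ℝ),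
          (∫ x, gjFn n₁ n₂ m K hK q Vsc cfun j (D, x)
            ∂(Measure.map (fun ω (l : Fin m) => ξ l ω) μ))
          ≤ HjFn n₁ n₂ m K hK q Vsc cfun j D := by
        intro D
        have hξ₀m : Measurable ξ₀ := by rw [← hξeq j]; exact hξmeas j
        have hveq : (fun ω (l : Fin m) => ξ l ω) = (fun (s : ℝ) (_ : Fin m) => s) ∘ ξ₀ := by
          funext ω l
          simp only [Function.comp_apply]
          rw [hξeq l]
        have hsm : AEStronglyMeasurable (fun x : Fin m → ℝ =>
            gjFn n₁ n₂ m K hK q Vsc cfun j (D, x))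
            (Measure.map (fun (s : ℝ) (_ : Fin m) => s)
              ((volume : Measure ℝ).restrict (Set.Icc 0 1))) :=
          ((measurable_gjFn n₁ n₂ m K hK q Vsc cfun hVscMeas hcfun j).comp
            measurable_prodMk_left).aestronglyMeasurable
        have hembm : Measurable (fun (s : ℝ) (_ : Fin m) => s) :=
          measurable_pi_lambda _ fun _ => measurable_id
        rw [hveq, ← Measure.map_map hembm hξ₀m, hξlaw, integral_map hembm.aemeasurable hsm]
        exact gj_fam_le n₁ n₂ m K hK q Vsc cfun j D (fun s (_ : Fin m) => s)
          (fun s => rfl) (fun a c hac l => hac)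
      calc (∫ ω, gjFn n₁ n₂ m K hK q Vsc cfun j
            ((fun i => Zprep i ω, fun i => Zcal i ω, fun l => Xt l ω, fun l => Yt l ω),
              fun l => ξ l ω) ∂μ)
          = ∫ Dx, gjFn n₁ n₂ m K hK q Vsc cfun j Dx
              ∂(Measure.map (fun ω =>
                (((fun i => Zprep i ω, fun i => Zcal i ω, fun l => Xt l ω, fun l => Yt l ω) :
                  (Fin n₁ → 𝓧 × ℝ) × (Fin n₂ → 𝓧 × ℝ) × (Fin m → 𝓧) × (Fin m → ℝ)),
                  fun (l : Fin m) => ξ l ω)) μ) :=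
            (integral_map (hDmeas.prodMk hxivm).aemeasurable
              (measurable_gjFn n₁ n₂ m K hK q Vsc cfun hVscMeas hcfun
                j).aestronglyMeasurable).symm
        _ = ∫ Dx, gjFn n₁ n₂ m K hK q Vsc cfun j Dx
              ∂((Measure.map (fun ω =>
                ((fun i => Zprep i ω, fun i => Zcal i ω, fun l => Xt l ω, fun l => Yt l ω) :
                  (Fin n₁ → 𝓧 × ℝ) × (Fin n₂ → 𝓧 × ℝ) × (Fin m → 𝓧) × (Fin m → ℝ))) μ).prod
                (Measure.map (fun ω (l : Fin m) => ξ l ω) μ)) := by rw [hmap]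
        _ = ∫ D, ∫ x, gjFn n₁ n₂ m K hK q Vsc cfun j (D, x)
              ∂(Measure.map (fun ω (l : Fin m) => ξ l ω) μ)
              ∂(Measure.map (fun ω =>
                ((fun i => Zprep i ω, fun i => Zcal i ω, fun l => Xt l ω, fun l => Yt l ω) :
                  (Fin n₁ → 𝓧 × ℝ) × (Fin n₂ → 𝓧 × ℝ) × (Fin m → 𝓧) × (Fin m → ℝ))) μ) :=
            integral_prod _ hprodInt
        _ ≤ ∫ D, HjFn n₁ n₂ m K hK q Vsc cfun j D
              ∂(Measure.map (fun ω =>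
                ((fun i => Zprep i ω, fun i => Zcal i ω, fun l => Xt l ω, fun l => Yt l ω) :
                  (Fin n₁ → 𝓧 × ℝ) × (Fin n₂ → 𝓧 × ℝ) × (Fin m → 𝓧) × (Fin m → ℝ))) μ) := by
            refine integral_mono_of_nonneg
              (Filter.Eventually.of_forall fun D => integral_nonneg fun x => hGnn j _)
              ((integrable_const (1:ℝ)).mono'
                (measurable_HjFn n₁ n₂ m K hK q Vsc cfun hVscMeas hcfun
                  j).aestronglyMeasurable
                (Filter.Eventually.of_forall fun D => hHb D))
              (Filter.Eventually.of_forall fun D => hinner D)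
        _ = ∫ ω, HjFn n₁ n₂ m K hK q Vsc cfun j
              (fun i => Zprep i ω, fun i => Zcal i ω, fun l => Xt l ω, fun l => Yt l ω) ∂μ :=
            integral_map hDmeas.aemeasurable
              (measurable_HjFn n₁ n₂ m K hK q Vsc cfun hVscMeas hcfun j).aestronglyMeasurable
    · -- heterogeneous pruning
      have hmap : Measure.map (fun ω =>
          (((fun i => Zprep i ω, fun i => Zcal i ω, fun l => Xt l ω, fun l => Yt l ω) :
            (Fin n₁ → 𝓧 × ℝ) × (Fin n₂ → 𝓧 × ℝ) × (Fin m → 𝓧) × (Fin m → ℝ)),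
            fun (l : Fin m) => ξ l ω)) μ
          = (Measure.map (fun ω =>
              ((fun i => Zprep i ω, fun i => Zcal i ω, fun l => Xt l ω, fun l => Yt l ω) :
                (Fin n₁ → 𝓧 × ℝ) × (Fin n₂ → 𝓧 × ℝ) × (Fin m → 𝓧) × (Fin m → ℝ))) μ).prod
            (Measure.map (fun ω (l : Fin m) => ξ l ω) μ) :=
        (indepFun_iff_map_prod_eq_prod_map_map hDmeas.aemeasurable hxivm.aemeasurable).mp
          hind.symm
      haveI hPD : IsProbabilityMeasure (Measure.map (fun ω =>
          ((fun i => Zprep i ω, fun i => Zcal i ω, fun l => Xt l ω, fun l => Yt l ω) :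
            (Fin n₁ → 𝓧 × ℝ) × (Fin n₂ → 𝓧 × ℝ) × (Fin m → 𝓧) × (Fin m → ℝ))) μ) :=
        Measure.isProbabilityMeasure_map hDmeas.aemeasurable
      haveI hPx : IsProbabilityMeasure (Measure.map (fun ω (l : Fin m) => ξ l ω) μ) :=
        Measure.isProbabilityMeasure_map hxivm.aemeasurable
      have hprodInt : Integrable (fun Dx => gjFn n₁ n₂ m K hK q Vsc cfun j Dx)
          ((Measure.map (fun ω =>
              ((fun i => Zprep i ω, fun i => Zcal i ω, fun l => Xt l ω, fun l => Yt l ω) :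
                (Fin n₁ → 𝓧 × ℝ) × (Fin n₂ → 𝓧 × ℝ) × (Fin m → 𝓧) × (Fin m → ℝ))) μ).prod
            (Measure.map (fun ω (l : Fin m) => ξ l ω) μ)) :=
        (integrable_const (1:ℝ)).mono'
          (measurable_gjFn n₁ n₂ m K hK q Vsc cfun hVscMeas hcfun j).aestronglyMeasurable
          (Filter.Eventually.of_forall fun Dx => by
            rw [Real.norm_eq_abs, abs_of_nonneg (hGnn j _)]
            exact hGle1 j _)
      have hinner : ∀ D : (Fin n₁ → 𝓧 × ℝ) × (Fin n₂ → 𝓧 × ℝ) × (Fin m → 𝓧) × (Fin m → ℝ),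
          (∫ x, gjFn n₁ n₂ m K hK q Vsc cfun j (D, x)
            ∂(Measure.map (fun ω (l : Fin m) => ξ l ω) μ))
          ≤ HjFn n₁ n₂ m K hK q Vsc cfun j D := by
        intro D
        rw [hξlaw]
        exact pi_prune_bound n₁ n₂ m K hK q Vsc hVscMeas cfun hcfun j D
      calc (∫ ω, gjFn n₁ n₂ m K hK q Vsc cfun j
            ((fun i => Zprep i ω, fun i => Zcal i ω, fun l => Xt l ω, fun l => Yt l ω),
              fun l => ξ l ω) ∂μ)
          = ∫ Dx, gjFn n₁ n₂ m K hK q Vsc cfun j Dx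
              ∂(Measure.map (fun ω =>
                (((fun i => Zprep i ω, fun i => Zcal i ω, fun l => Xt l ω, fun l => Yt l ω) :
                  (Fin n₁ → 𝓧 × ℝ) × (Fin n₂ → 𝓧 × ℝ) × (Fin m → 𝓧) × (Fin m → ℝ)),
                  fun (l : Fin m) => ξ l ω)) μ) :=
            (integral_map (hDmeas.prodMk hxivm).aemeasurable
              (measurable_gjFn n₁ n₂ m K hK q Vsc cfun hVscMeas hcfun
                j).aestronglyMeasurable).symm
        _ = ∫ Dx, gjFn n₁ n₂ m K hK q Vsc cfun j Dx
              ∂((Measure.map (fun ω =>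
                ((fun i => Zprep i ω, fun i => Zcal i ω, fun l => Xt l ω, fun l => Yt l ω) :
                  (Fin n₁ → 𝓧 × ℝ) × (Fin n₂ → 𝓧 × ℝ) × (Fin m → 𝓧) × (Fin m → ℝ))) μ).prod
                (Measure.map (fun ω (l : Fin m) => ξ l ω) μ)) := by rw [hmap]
        _ = ∫ D, ∫ x, gjFn n₁ n₂ m K hK q Vsc cfun j (D, x)
              ∂(Measure.map (fun ω (l : Fin m) => ξ l ω) μ)
              ∂(Measure.map (fun ω =>
                ((fun i => Zprep i ω, fun i => Zcal i ω, fun l => Xt l ω, fun l => Yt l ω) :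
                  (Fin n₁ → 𝓧 × ℝ) × (Fin n₂ → 𝓧 × ℝ) × (Fin m → 𝓧) × (Fin m → ℝ))) μ) :=
            integral_prod _ hprodInt
        _ ≤ ∫ D, HjFn n₁ n₂ m K hK q Vsc cfun j D
              ∂(Measure.map (fun ω =>
                ((fun i => Zprep i ω, fun i => Zcal i ω, fun l => Xt l ω, fun l => Yt l ω) :
                  (Fin n₁ → 𝓧 × ℝ) × (Fin n₂ → 𝓧 × ℝ) × (Fin m → 𝓧) × (Fin m → ℝ))) μ) := by
            refine integral_mono_of_nonneg
              (Filter.Eventually.of_forall fun D => integral_nonneg fun x => hGnn j _)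
              ((integrable_const (1:ℝ)).mono'
                (measurable_HjFn n₁ n₂ m K hK q Vsc cfun hVscMeas hcfun
                  j).aestronglyMeasurable
                (Filter.Eventually.of_forall fun D => hHb D))
              (Filter.Eventually.of_forall fun D => hinner D)
        _ = ∫ ω, HjFn n₁ n₂ m K hK q Vsc cfun j
              (fun i => Zprep i ω, fun i => Zcal i ω, fun l => Xt l ω, fun l => Yt l ω) ∂μ :=
            integral_map hDmeas.aemeasurable
              (measurable_HjFn n₁ n₂ m K hK q Vsc cfun hVscMeas hcfun j).aestronglyMeasurable
  -- conclusion
  refine le_trans (le_of_eq (integral_congr_ae (Filter.Eventually.of_forall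
    (fun ω => hsplit_pure n₁ n₂ m K hK q Vsc cfun
      (fun i => Zprep i ω, fun i => Zcal i ω, fun l => Xt l ω, fun l => Yt l ω)
      (fun l => ξ l ω))))) ?_
  rw [integral_finset_sum Finset.univ (fun j _ => hGint j)]
  refine le_trans (Finset.sum_le_sum (fun j _ => hper j)) ?_
  rw [Finset.sum_const, Finset.card_univ, Fintype.card_fin, nsmul_eq_mul]
  rcases Nat.eq_zero_or_pos m with h0 | hpos
  · subst h0
    simpa using hq0.le
  · have hm0 : (m : ℝ) ≠ 0 := Nat.cast_ne_zero.mpr (Nat.pos_iff_ne_zero.mp hpos)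
    rw [mul_comm, div_mul_cancel₀ q hm0]



end OptCS
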